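/- arXiv:1110.4892 — 5 statements merged into one kernel-verified Lean document; each statement's English description precedes it below -/
import Mathlib

section
/- Let p ≥ 2 be an integer. Assume there exist nonzero real numbers a_1 = 1, a_2, …, a_p such that ⟨E_{M1⋯Mk} | F^{N1⋯Nk}⟩ = a_k (ℙ_k)_{M1⋯Mk}^{N1⋯Nk} for k = 2, …, p. Then for all indices M, N1, …, Np the following identity holds in U_{p−1}: ⟦E_M, F^{N1⋯Np}⟧ = (−1)^p (a_p/a_{p−1}) Σ_{M2,…,Mp} (ℙ_p)_{M M2⋯Mp}^{N1⋯Np} F^{M2⋯Mp}. -/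
/-- Nested bracket `⟦f M1, ⟦f M2, …, ⟦f M(k-1), f Mk⟧⋯⟧⟧` of a family `f : ι → V`
along a tuple of `k` indices (junk value `0` for `k = 0`). -/
def nest {V : Type} [AddCommGroup V] [Module ℝ V] {ι : Type}
    (bb : V →ₗ[ℝ] V →ₗ[ℝ] V) (f : ι → V) : (k : ℕ) → (Fin k → ι) → V
  | 0, _ => 0
  | 1, M => f (M 0)
  | (k + 2), M => bb (f (M 0)) (nest bb f (k + 1) (fun i => M i.succ))

/-- In a ℤ-graded Lie superalgebra with an invariant bilinear form,
families `E`, `F` in degrees `∓1` with `⟨E_M|F^N⟩ = δ_M^N`, nested elements spanning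
the graded pieces, projectors `ℙ_k` and nonzero constants `a_k` (with `a_1 = 1`) such
that `⟨E_{M1⋯Mk}|F^{N1⋯Nk}⟩ = a_k ℙ_k` for `2 ≤ k ≤ p`, we have (with `p = k + 2 ≥ 2`)
`⟦E_M, F^{N1⋯Np}⟧ = (−1)^p (a_p/a_{p−1}) Σ (ℙ_p)_{M M2⋯Mp}{}^{N1⋯Np} F^{M2⋯Mp}`. -/
theorem bracket_E_with_F_multi
    {V : Type} [AddCommGroup V] [Module ℝ V]
    (U : ℤ → Submodule ℝ V)
    (bb : V →ₗ[ℝ] V →ₗ[ℝ] V)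
    (form : V →ₗ[ℝ] V →ₗ[ℝ] ℝ)
    (hgrade : ∀ (p q : ℤ) (x y : V), x ∈ U p → y ∈ U q → bb x y ∈ U (p + q))
    (hanti : ∀ (p q : ℤ) (x y : V), x ∈ U p → y ∈ U q →
      bb x y = (-((-1 : ℝ) ^ (p * q))) • bb y x)
    (hjac : ∀ (p q : ℤ) (x y z : V), x ∈ U p → y ∈ U q →
      bb (bb x y) z = bb x (bb y z) - ((-1 : ℝ) ^ (p * q)) • bb y (bb x z))
    (hform0 : ∀ (p q : ℤ) (x y : V), x ∈ U p → y ∈ U q → p + q ≠ 0 → form x y = 0)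
    (hforminv : ∀ x y z : V, form (bb x y) z = form x (bb y z))
    {ι : Type} [Fintype ι] [DecidableEq ι]
    (E F : ι → V)
    (hE : ∀ M, E M ∈ U (-1))
    (hF : ∀ M, F M ∈ U 1)
    (hEF : ∀ M N, form (E M) (F N) = if M = N then (1 : ℝ) else 0)
    (hspanE : ∀ m : ℕ, 1 ≤ m → U (-(m : ℤ)) ≤ Submodule.span ℝ (Set.range (nest bb E m)))
    (hspanF : ∀ m : ℕ, 1 ≤ m → U (m : ℤ) ≤ Submodule.span ℝ (Set.range (nest bb F m)))
    (k : ℕ)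
    (P : (m : ℕ) → (Fin m → ι) → (Fin m → ι) → ℝ)
    (hP1 : ∀ M N : Fin 1 → ι, P 1 M N = if M 0 = N 0 then (1 : ℝ) else 0)
    (hPidem : ∀ m, 2 ≤ m → m ≤ k + 2 → ∀ M N : Fin m → ι,
      ∑ Q : Fin m → ι, P m M Q * P m Q N = P m M N)
    (hPE : ∀ m, 2 ≤ m → m ≤ k + 2 → ∀ M : Fin m → ι,
      nest bb E m M = ∑ N : Fin m → ι, P m M N • nest bb E m N)
    (hPF : ∀ m, 2 ≤ m → m ≤ k + 2 → ∀ N : Fin m → ι,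
      nest bb F m N = ∑ M : Fin m → ι, P m M N • nest bb F m M)
    (hPnest : ∀ m : ℕ, 2 ≤ m + 1 → m + 1 ≤ k + 2 → ∀ M N : Fin (m + 1) → ι,
      P (m + 1) M N = ∑ A : Fin m → ι, ∑ B : Fin m → ι,
        P m (Fin.tail M) A * P (m + 1) (Fin.cons (M 0) A) (Fin.cons (N 0) B) *
          P m B (Fin.tail N))
    (a : ℕ → ℝ)
    (ha1 : a 1 = 1)
    (hane : ∀ m, 1 ≤ m → m ≤ k + 2 → a m ≠ 0)
    (haP : ∀ m, 2 ≤ m → m ≤ k + 2 → ∀ M N : Fin m → ι,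
      form (nest bb E m M) (nest bb F m N) = a m * P m M N) :
    ∀ (M : ι) (N : Fin (k + 2) → ι),
      bb (E M) (nest bb F (k + 2) N)
        = ((-1 : ℝ) ^ (k + 2) * (a (k + 2) / a (k + 1))) •
            ∑ Q : Fin (k + 1) → ι, P (k + 2) (Fin.cons M Q) N • nest bb F (k + 1) Q := by

  intro M N
  -- grade of nested E/F elements
  have nestE_mem : ∀ m (R : Fin (m+1) → ι), nest bb E (m+1) R ∈ U (-((m : ℤ)+1)) := by
    intro m
    induction m with
    | zero => intro R; simpa [nest] using hE (R 0)
    | succ n ih =>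
      intro R
      have h := hgrade (-1) (-((n : ℤ)+1)) (E (R 0)) (nest bb E (n+1) (fun i => R i.succ))
        (hE _) (ih _)
      have e : (-1 : ℤ) + -((n : ℤ)+1) = -(((n+1 : ℕ) : ℤ)+1) := by push_cast; ring
      rw [e] at h
      exact h
  have nestF_mem : ∀ m (R : Fin (m+1) → ι), nest bb F (m+1) R ∈ U ((m : ℤ)+1) := by
    intro m
    induction m with
    | zero => intro R; simpa [nest] using hF (R 0)
    | succ n ih =>
      intro R
      have h := hgrade 1 ((n : ℤ)+1) (F (R 0)) (nest bb F (n+1) (fun i => R i.succ))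
        (hF _) (ih _)
      have e : (1 : ℤ) + ((n : ℤ)+1) = (((n+1 : ℕ) : ℤ)+1) := by push_cast; ring
      rw [e] at h
      exact h
  -- extended pairing / projector identities valid from m = 1
  have fin1ext : ∀ {R Q : Fin 1 → ι}, R 0 = Q 0 → R = Q := by
    intro R Q h
    funext i
    have : i = 0 := Subsingleton.elim _ _
    rw [this, h]
  have haP' : ∀ m, 1 ≤ m → m ≤ k+2 → ∀ R Q : Fin m → ι,
      form (nest bb E m R) (nest bb F m Q) = a m * P m R Q := by
    intro m h1 h2 R Q
    match m, h1 with
    | 1, _ =>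
      show form (E (R 0)) (F (Q 0)) = _
      rw [hEF, hP1, ha1, one_mul]
    | (n+2), _ => exact haP (n+2) (by omega) h2 R Q
  have hPF' : ∀ m, 1 ≤ m → m ≤ k+2 → ∀ Q : Fin m → ι,
      nest bb F m Q = ∑ R : Fin m → ι, P m R Q • nest bb F m R := by
    intro m h1 h2 Q
    match m, h1 with
    | 1, _ =>
      rw [Fintype.sum_eq_single Q]
      · rw [hP1]; simp
      · intro R hR
        have : ¬ R 0 = Q 0 := fun h => hR (fin1ext h)
        rw [hP1]; simp [this]
    | (n+2), _ => exact hPF (n+2) (by omega) h2 Q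
  have hPE' : ∀ m, 1 ≤ m → m ≤ k+2 → ∀ R : Fin m → ι,
      nest bb E m R = ∑ Q : Fin m → ι, P m R Q • nest bb E m Q := by
    intro m h1 h2 R
    match m, h1 with
    | 1, _ =>
      rw [Fintype.sum_eq_single R]
      · rw [hP1]; simp
      · intro Q hQ
        have : ¬ R 0 = Q 0 := fun h => hQ ((fin1ext h).symm)
        rw [hP1]; simp [this]
    | (n+2), _ => exact hPE (n+2) (by omega) h2 R
  -- unfolding of nest at a cons
  have hdefE : ∀ S : Fin (k+1) → ι,
      nest bb E (k+2) (Fin.cons M S) = bb (E M) (nest bb E (k+1) S) := by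
    intro S
    simp [nest, Fin.cons_zero, Fin.cons_succ]
  -- key projector identity
  have hPid : ∀ (R : Fin (k+1) → ι),
      ∑ Q : Fin (k+1) → ι, P (k+1) R Q * P (k+2) (Fin.cons M Q) N
        = P (k+2) (Fin.cons M R) N := by
    intro R
    have hE1 : nest bb E (k+2) (Fin.cons M R)
        = ∑ Q : Fin (k+1) → ι, P (k+1) R Q • nest bb E (k+2) (Fin.cons M Q) := by
      rw [hdefE, hPE' (k+1) (by omega) (by omega) R, map_sum]
      refine Finset.sum_congr rfl fun Q _ => ?_
      rw [map_smul, hdefE]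
    have h2 := congrArg (fun z => form z (nest bb F (k+2) N)) hE1
    simp only [map_sum, map_smul, LinearMap.sum_apply, LinearMap.smul_apply,
      smul_eq_mul] at h2
    rw [haP (k+2) (by omega) (by omega)] at h2
    have h3 : a (k+2) * P (k+2) (Fin.cons M R) N
        = a (k+2) * ∑ Q : Fin (k+1) → ι, P (k+1) R Q * P (k+2) (Fin.cons M Q) N := by
      rw [h2, Finset.mul_sum]
      refine Finset.sum_congr rfl fun Q _ => ?_
      rw [haP (k+2) (by omega) (by omega)]
      ring
    have := hane (k+2) (by omega) (by omega)
    have := mul_left_cancel₀ this h3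
    linarith [this]
  -- nondegeneracy of the pairing on the span of degree-(k+1) F-nests
  have key : ∀ x : V, x ∈ Submodule.span ℝ (Set.range (nest bb F (k+1))) →
      (∀ R : Fin (k+1) → ι, form (nest bb E (k+1) R) x = 0) → x = 0 := by
    intro x hx h0
    obtain ⟨c, hc⟩ := (Submodule.mem_span_range_iff_exists_fun ℝ).mp hx
    have hPc : ∀ R : Fin (k+1) → ι, ∑ Q : Fin (k+1) → ι, P (k+1) R Q * c Q = 0 := by
      intro R
      have h := h0 R
      rw [← hc, map_sum] at h
      simp only [map_smul, smul_eq_mul] at h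
      have h2 : ∑ Q : Fin (k+1) → ι, c Q * (a (k+1) * P (k+1) R Q) = 0 := by
        rw [← h]
        exact Finset.sum_congr rfl fun Q _ => by
          rw [haP' (k+1) (by omega) (by omega)]
      have h3 : a (k+1) * ∑ Q : Fin (k+1) → ι, P (k+1) R Q * c Q = 0 := by
        rw [Finset.mul_sum, ← h2]
        exact Finset.sum_congr rfl fun Q _ => by ring
      exact (mul_eq_zero.mp h3).resolve_left (hane (k+1) (by omega) (by omega))
    calc x = ∑ Q : Fin (k+1) → ι, c Q • nest bb F (k+1) Q := hc.symm
      _ = ∑ Q : Fin (k+1) → ι, c Q •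
            ∑ R : Fin (k+1) → ι, P (k+1) R Q • nest bb F (k+1) R := by
          exact Finset.sum_congr rfl fun Q _ => by
            rw [← hPF' (k+1) (by omega) (by omega)]
      _ = ∑ R : Fin (k+1) → ι,
            (∑ Q : Fin (k+1) → ι, P (k+1) R Q * c Q) • nest bb F (k+1) R := by
          simp only [Finset.smul_sum, smul_smul]
          rw [Finset.sum_comm]
          refine Finset.sum_congr rfl fun R _ => ?_
          rw [Finset.sum_smul]
          exact Finset.sum_congr rfl fun Q _ => by rw [mul_comm]
      _ = 0 := by simp [hPc]
  -- the two sides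
  set x := bb (E M) (nest bb F (k+2) N) with hxdef
  set y := ((-1 : ℝ) ^ (k + 2) * (a (k + 2) / a (k + 1))) •
      ∑ Q : Fin (k + 1) → ι, P (k + 2) (Fin.cons M Q) N • nest bb F (k + 1) Q with hydef
  -- x is in the span
  have hxU : x ∈ U (((k+1 : ℕ) : ℤ)) := by
    have h := hgrade (-1) (((k+1 : ℕ) : ℤ)+1) (E M) (nest bb F (k+2) N) (hE M)
      (nestF_mem (k+1) N)
    have e : (-1 : ℤ) + (((k+1 : ℕ) : ℤ)+1) = ((k+1 : ℕ) : ℤ) := by push_cast; ring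
    rw [e] at h
    exact h
  have hxspan : x ∈ Submodule.span ℝ (Set.range (nest bb F (k+1))) :=
    hspanF (k+1) (by omega) hxU
  have hyspan : y ∈ Submodule.span ℝ (Set.range (nest bb F (k+1))) := by
    rw [hydef]
    refine Submodule.smul_mem _ _ (Submodule.sum_mem _ fun Q _ => ?_)
    exact Submodule.smul_mem _ _ (Submodule.subset_span ⟨Q, rfl⟩)
  -- pairings of both sides with nest E (k+1) R
  have hfx : ∀ R : Fin (k+1) → ι,
      form (nest bb E (k+1) R) x
        = (-1 : ℝ)^(k+2) * (a (k+2) * P (k+2) (Fin.cons M R) N) := by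
    intro R
    rw [hxdef, ← hforminv]
    have hanti' := hanti (-((k : ℤ)+1)) (-1) (nest bb E (k+1) R) (E M)
      (nestE_mem k R) (hE M)
    rw [hanti', map_smul, LinearMap.smul_apply, smul_eq_mul]
    have hsg : (-((-1 : ℝ) ^ ((-((k : ℤ)+1)) * (-1)))) = (-1 : ℝ)^(k+2) := by
      have e : (-((k : ℤ)+1)) * (-1) = ((k+1 : ℕ) : ℤ) := by push_cast; ring
      rw [e, zpow_natCast, pow_succ, pow_succ]
      ring
    rw [hsg, ← hdefE, haP (k+2) (by omega) (by omega)]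
  have hfy : ∀ R : Fin (k+1) → ι,
      form (nest bb E (k+1) R) y
        = (-1 : ℝ)^(k+2) * (a (k+2) * P (k+2) (Fin.cons M R) N) := by
    intro R
    rw [hydef, map_smul, smul_eq_mul, map_sum]
    have hterm : ∀ Q : Fin (k+1) → ι,
        form (nest bb E (k+1) R) (P (k + 2) (Fin.cons M Q) N • nest bb F (k + 1) Q)
          = a (k+1) * (P (k+1) R Q * P (k + 2) (Fin.cons M Q) N) := by
      intro Q
      rw [map_smul, smul_eq_mul, haP' (k+1) (by omega) (by omega)]
      ring
    rw [Finset.sum_congr rfl fun Q _ => hterm Q, ← Finset.mul_sum, hPid R]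
    have hne := hane (k+1) (by omega) (by omega)
    field_simp
  have hxy : x - y = 0 := by
    refine key _ (Submodule.sub_mem _ hxspan hyspan) fun R => ?_
    rw [map_sub, hfx, hfy, sub_self]
  exact sub_eq_zero.mp hxy
end

section
/- Let p ≥ 2 be an integer. Assume there exist nonzero real numbers a_1 = 1, a_2, …, a_p such that ⟨E_{M1⋯Mk} | F^{N1⋯Nk}⟩ = a_k (ℙ_k)_{M1⋯Mk}^{N1⋯Nk} for k = 2, …, p. Then for all indices M2, …, Mp, N1, …, Np the following identity holds in U_1: ⟦E_{M2⋯Mp}, F^{N1⋯Np}⟧ = a_p Σ_{M1} (ℙ_p)_{M1 M2⋯Mp}^{N1⋯Np} F^{M1}. -/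
/-- Under the tensor-hierarchy hypotheses (with `p = k + 2 ≥ 2`):
`⟦E_{M2⋯Mp}, F^{N1⋯Np}⟧ = a_p Σ_{M1} (ℙ_p)_{M1 M2⋯Mp}{}^{N1⋯Np} F^{M1}`. -/
theorem bracket_E_multi_with_F_multi_top
    {V : Type} [AddCommGroup V] [Module ℝ V]
    (U : ℤ → Submodule ℝ V)
    (bb : V →ₗ[ℝ] V →ₗ[ℝ] V)
    (form : V →ₗ[ℝ] V →ₗ[ℝ] ℝ)
    (hgrade : ∀ (p q : ℤ) (x y : V), x ∈ U p → y ∈ U q → bb x y ∈ U (p + q))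
    (hanti : ∀ (p q : ℤ) (x y : V), x ∈ U p → y ∈ U q →
      bb x y = (-((-1 : ℝ) ^ (p * q))) • bb y x)
    (hjac : ∀ (p q : ℤ) (x y z : V), x ∈ U p → y ∈ U q →
      bb (bb x y) z = bb x (bb y z) - ((-1 : ℝ) ^ (p * q)) • bb y (bb x z))
    (hform0 : ∀ (p q : ℤ) (x y : V), x ∈ U p → y ∈ U q → p + q ≠ 0 → form x y = 0)
    (hforminv : ∀ x y z : V, form (bb x y) z = form x (bb y z))
    {ι : Type} [Fintype ι] [DecidableEq ι]
    (E F : ι → V)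
    (hE : ∀ M, E M ∈ U (-1))
    (hF : ∀ M, F M ∈ U 1)
    (hEF : ∀ M N, form (E M) (F N) = if M = N then (1 : ℝ) else 0)
    (hspanE : ∀ m : ℕ, 1 ≤ m → U (-(m : ℤ)) ≤ Submodule.span ℝ (Set.range (nest bb E m)))
    (hspanF : ∀ m : ℕ, 1 ≤ m → U (m : ℤ) ≤ Submodule.span ℝ (Set.range (nest bb F m)))
    (k : ℕ)
    (P : (m : ℕ) → (Fin m → ι) → (Fin m → ι) → ℝ)
    (hP1 : ∀ M N : Fin 1 → ι, P 1 M N = if M 0 = N 0 then (1 : ℝ) else 0)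
    (hPidem : ∀ m, 2 ≤ m → m ≤ k + 2 → ∀ M N : Fin m → ι,
      ∑ Q : Fin m → ι, P m M Q * P m Q N = P m M N)
    (hPE : ∀ m, 2 ≤ m → m ≤ k + 2 → ∀ M : Fin m → ι,
      nest bb E m M = ∑ N : Fin m → ι, P m M N • nest bb E m N)
    (hPF : ∀ m, 2 ≤ m → m ≤ k + 2 → ∀ N : Fin m → ι,
      nest bb F m N = ∑ M : Fin m → ι, P m M N • nest bb F m M)
    (hPnest : ∀ m : ℕ, 2 ≤ m + 1 → m + 1 ≤ k + 2 → ∀ M N : Fin (m + 1) → ι,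
      P (m + 1) M N = ∑ A : Fin m → ι, ∑ B : Fin m → ι,
        P m (Fin.tail M) A * P (m + 1) (Fin.cons (M 0) A) (Fin.cons (N 0) B) *
          P m B (Fin.tail N))
    (a : ℕ → ℝ)
    (ha1 : a 1 = 1)
    (hane : ∀ m, 1 ≤ m → m ≤ k + 2 → a m ≠ 0)
    (haP : ∀ m, 2 ≤ m → m ≤ k + 2 → ∀ M N : Fin m → ι,
      form (nest bb E m M) (nest bb F m N) = a m * P m M N) :
    ∀ (M : Fin (k + 1) → ι) (N : Fin (k + 2) → ι),
      bb (nest bb E (k + 1) M) (nest bb F (k + 2) N)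
        = a (k + 2) • ∑ M1 : ι, P (k + 2) (Fin.cons M1 M) N • F M1 := by
  -- membership lemma for nested brackets
  have nest_mem : ∀ (f : ι → V) (ε : ℤ), (∀ M, f M ∈ U ε) →
      ∀ (m : ℕ) (Mm : Fin (m + 1) → ι), nest bb f (m + 1) Mm ∈ U ((m + 1 : ℤ) * ε) := by
    intro f ε hf m
    induction m with
    | zero => intro Mm; simpa [nest] using hf (Mm 0)
    | succ n ih =>
      intro Mm
      have h1 := hgrade ε ((n + 1 : ℤ) * ε) (f (Mm 0))
        (nest bb f (n + 1) (fun i => Mm i.succ)) (hf _) (ih _)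
      have heq : ε + (n + 1 : ℤ) * ε = ((n : ℤ) + 1 + 1) * ε := by ring
      rw [heq] at h1
      show bb (f (Mm 0)) (nest bb f (n + 1) (fun i => Mm i.succ)) ∈ _
      convert h1 using 2; push_cast; ring
  intro M N
  set x := bb (nest bb E (k + 1) M) (nest bb F (k + 2) N) with hx
  -- x ∈ U 1
  have hEm : nest bb E (k + 1) M ∈ U (-(k + 1 : ℤ)) := by
    have := nest_mem E (-1) hE k M
    convert this using 2; push_cast; ring
  have hFm : nest bb F (k + 2) N ∈ U ((k + 2 : ℤ)) := by
    have := nest_mem F 1 hF (k + 1) N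
    convert this using 2; push_cast; ring
  have hxU : x ∈ U 1 := by
    have := hgrade (-(k + 1 : ℤ)) (k + 2 : ℤ) _ _ hEm hFm
    have heq : (-(k + 1 : ℤ)) + (k + 2 : ℤ) = 1 := by ring
    rwa [heq] at this
  -- decomposition of elements of U 1
  have hdecomp : ∀ y : V, y ∈ U 1 → y = ∑ m : ι, form (E m) y • F m := by
    intro y hy
    set L : V →ₗ[ℝ] V := LinearMap.id - ∑ m : ι, (form (E m)).smulRight (F m) with hL
    have hy' : y ∈ Submodule.span ℝ (Set.range (nest bb F 1)) :=
      hspanF 1 le_rfl (by exact_mod_cast hy)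
    have hker : Submodule.span ℝ (Set.range (nest bb F 1)) ≤ LinearMap.ker L := by
      rw [Submodule.span_le]
      rintro _ ⟨Mm, rfl⟩
      have : L (nest bb F 1 Mm) = 0 := by
        simp [hL, nest, hEF, Finset.sum_ite_eq']
      simpa [LinearMap.mem_ker] using this
    have hLy : L y = 0 := hker hy'
    have : y - ∑ m : ι, form (E m) y • F m = 0 := by
      simpa [hL, LinearMap.sub_apply, LinearMap.sum_apply] using hLy
    linear_combination (norm := module) this
  -- coefficients
  have hcoef : ∀ m : ι, form (E m) x = a (k + 2) * P (k + 2) (Fin.cons m M) N := by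
    intro m
    have h1 : form (E m) x
        = form (bb (E m) (nest bb E (k + 1) M)) (nest bb F (k + 2) N) := by
      rw [hforminv]
    have h2 : bb (E m) (nest bb E (k + 1) M) = nest bb E (k + 2) (Fin.cons m M) := rfl
    rw [h1, h2]
    exact haP (k + 2) (by omega) le_rfl _ _
  calc x = ∑ m : ι, form (E m) x • F m := hdecomp x hxU
    _ = ∑ m : ι, (a (k + 2) * P (k + 2) (Fin.cons m M) N) • F m := by
        simp_rw [hcoef]
    _ = a (k + 2) • ∑ M1 : ι, P (k + 2) (Fin.cons M1 M) N • F M1 := by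
        rw [Finset.smul_sum]
        simp [smul_smul]
end

section
/- Let p ≥ 2 be an integer. Assume there exist nonzero real numbers a_1 = 1, a_2, …, a_p such that ⟨E_{M1⋯Mk} | F^{N1⋯Nk}⟩ = a_k (ℙ_k)_{M1⋯Mk}^{N1⋯Nk} for k = 2, …, p. Then for all indices M1, …, Mp, N1, …, Np the following identity holds in U_0: ⟦E_{M1⋯Mp}, F^{N1⋯Np}⟧ = a_p Σ_{P1,…,Pp} (ℙ_p)_{M1⋯Mp}^{P1⋯Pp} Σ_{i=1}^{p} δ_{P1}^{N1} ⋯ δ_{P(i−1)}^{N(i−1)} ⟦E_{Pi}, F^{Ni}⟧ δ_{P(i+1)}^{N(i+1)} ⋯ δ_{Pp}^{Np}, where in the i-th summand the scalar product of Kronecker deltas multiplies the element ⟦E_{Pi}, F^{Ni}⟧ ∈ U_0. -/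
section Aux
variable {ι : Type} [Fintype ι] [DecidableEq ι]

/-- Summing against a product of Kronecker deltas fixes all but one coordinate. -/
lemma sum_delta {V : Type} [AddCommMonoid V] [Module ℝ V] {m : ℕ}
    (i : Fin m) (N : Fin m → ι) (h : (Fin m → ι) → V) :
    ∑ Q : Fin m → ι,
        (∏ j ∈ Finset.univ.erase i, (if Q j = N j then (1 : ℝ) else 0)) • h Q
      = ∑ q : ι, h (Function.update N i q) := by
  have key : ∀ Q : Fin m → ι,
      (∏ j ∈ Finset.univ.erase i, (if Q j = N j then (1 : ℝ) else 0)) • h Q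
        = if Function.update N i (Q i) = Q then h Q else 0 := by
    intro Q
    rw [Finset.prod_boole]
    by_cases hc : Function.update N i (Q i) = Q
    · rw [if_pos, if_pos hc, one_smul]
      intro j hj
      have hji : j ≠ i := (Finset.mem_erase.mp hj).1
      rw [← hc, Function.update_of_ne hji]
    · rw [if_neg, if_neg hc, zero_smul]
      intro hall
      apply hc
      funext j
      by_cases hji : j = i
      · subst hji; rw [Function.update_self]
      · rw [Function.update_of_ne hji]
        exact (hall j (Finset.mem_erase.mpr ⟨hji, Finset.mem_univ j⟩)).symm
  rw [Finset.sum_congr rfl fun Q _ => key Q]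
  have rhs : ∀ q : ι, h (Function.update N i q)
      = ∑ Q : Fin m → ι, if Q = Function.update N i q then h Q else 0 := by
    intro q
    rw [Finset.sum_ite_eq' Finset.univ (Function.update N i q) h, if_pos (Finset.mem_univ _)]
  rw [Finset.sum_congr rfl fun q _ => rhs q, Finset.sum_comm]
  refine Finset.sum_congr rfl fun Q _ => ?_
  by_cases hc : Function.update N i (Q i) = Q
  · rw [if_pos hc]
    have : ∀ q : ι, (if Q = Function.update N i q then h Q else 0)
        = if q = Q i then h Q else 0 := by
      intro q
      congr 1
      simp only [eq_iff_iff]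
      constructor
      · intro hq; have := congrFun hq i; rw [Function.update_self] at this; exact this.symm
      · intro hq; subst hq; exact hc.symm
    refine (calc ∑ q : ι, (if Q = Function.update N i q then h Q else 0)
        = ∑ q : ι, (if q = Q i then h Q else 0) := Finset.sum_congr rfl fun q _ => this q
      _ = h Q := by simp).symm
  · rw [if_neg hc]
    refine (Finset.sum_eq_zero fun q _ => ?_).symm
    rw [if_neg]
    intro hq
    apply hc
    have hqi : Q i = q := by rw [hq, Function.update_self]
    rw [hqi, ← hq]

lemma sum_fun1 {M : Type} [AddCommMonoid M] (g : ι → M) :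
    ∑ B : Fin 1 → ι, g (B 0) = ∑ q : ι, g q :=
  Fintype.sum_equiv (Equiv.funUnique (Fin 1) ι) _ _ (fun _ => rfl)

lemma cons_tail_update0 {m : ℕ} (N : Fin (m+1) → ι) (q : ι) :
    Fin.cons q (Fin.tail N) = Function.update N 0 q := by
  funext j
  cases j using Fin.cases with
  | zero => simp
  | succ j => simp [Fin.tail, Function.update_of_ne (Fin.succ_ne_zero j)]

lemma cons_update {m : ℕ} (N : Fin (m+1) → ι) (i : Fin m) (q : ι) :
    Fin.cons (N 0) (Function.update (Fin.tail N) i q) = Function.update N i.succ q := by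
  funext j
  cases j using Fin.cases with
  | zero => simp [Function.update_of_ne (Fin.succ_ne_zero i).symm]
  | succ j =>
    rw [Fin.cons_succ]
    by_cases hji : j = i
    · subst hji; simp
    · rw [Function.update_of_ne hji, Function.update_of_ne (by simpa [Fin.succ_inj] using hji)]
      rfl

end Aux

section Nest
variable {V : Type} [AddCommGroup V] [Module ℝ V] {ι : Type}

lemma nest_cons (bb : V →ₗ[ℝ] V →ₗ[ℝ] V) (f : ι → V) (m : ℕ) (hm : 1 ≤ m) (q : ι)
    (B : Fin m → ι) :
    nest bb f (m + 1) (Fin.cons q B) = bb (f q) (nest bb f m B) := by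
  cases m with
  | zero => omega
  | succ n =>
    have hcz : (Fin.cons q B : Fin (n + 1 + 1) → ι) 0 = q :=
      @Fin.cons_zero (n + 1) (fun _ => ι) q B
    have hct : (fun i : Fin (n + 1) => (Fin.cons q B : Fin (n + 1 + 1) → ι) i.succ) = B := by
      funext i; exact @Fin.cons_succ (n + 1) (fun _ => ι) q B i
    show bb (f ((Fin.cons q B : Fin (n + 1 + 1) → ι) 0))
        (nest bb f (n + 1) (fun i => (Fin.cons q B : Fin (n + 1 + 1) → ι) i.succ)) = _
    rw [hcz, hct]

end Nest

/-- Under the tensor-hierarchy hypotheses (with `p = k + 2 ≥ 2`):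
`⟦E_{M1⋯Mp}, F^{N1⋯Np}⟧ = a_p Σ_P (ℙ_p)_{M1⋯Mp}{}^{P1⋯Pp} Σ_i δ_{P1}^{N1} ⋯ ⟦E_{Pi},F^{Ni}⟧ ⋯ δ_{Pp}^{Np}`. -/
theorem bracket_E_multi_with_F_multi
    {V : Type} [AddCommGroup V] [Module ℝ V]
    (U : ℤ → Submodule ℝ V)
    (bb : V →ₗ[ℝ] V →ₗ[ℝ] V)
    (form : V →ₗ[ℝ] V →ₗ[ℝ] ℝ)
    (hgrade : ∀ (p q : ℤ) (x y : V), x ∈ U p → y ∈ U q → bb x y ∈ U (p + q))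
    (hanti : ∀ (p q : ℤ) (x y : V), x ∈ U p → y ∈ U q →
      bb x y = (-((-1 : ℝ) ^ (p * q))) • bb y x)
    (hjac : ∀ (p q : ℤ) (x y z : V), x ∈ U p → y ∈ U q →
      bb (bb x y) z = bb x (bb y z) - ((-1 : ℝ) ^ (p * q)) • bb y (bb x z))
    (hform0 : ∀ (p q : ℤ) (x y : V), x ∈ U p → y ∈ U q → p + q ≠ 0 → form x y = 0)
    (hforminv : ∀ x y z : V, form (bb x y) z = form x (bb y z))
    {ι : Type} [Fintype ι] [DecidableEq ι]
    (E F : ι → V)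
    (hE : ∀ M, E M ∈ U (-1))
    (hF : ∀ M, F M ∈ U 1)
    (hEF : ∀ M N, form (E M) (F N) = if M = N then (1 : ℝ) else 0)
    (hspanE : ∀ m : ℕ, 1 ≤ m → U (-(m : ℤ)) ≤ Submodule.span ℝ (Set.range (nest bb E m)))
    (hspanF : ∀ m : ℕ, 1 ≤ m → U (m : ℤ) ≤ Submodule.span ℝ (Set.range (nest bb F m)))
    (k : ℕ)
    (P : (m : ℕ) → (Fin m → ι) → (Fin m → ι) → ℝ)
    (hP1 : ∀ M N : Fin 1 → ι, P 1 M N = if M 0 = N 0 then (1 : ℝ) else 0)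
    (hPidem : ∀ m, 2 ≤ m → m ≤ k + 2 → ∀ M N : Fin m → ι,
      ∑ Q : Fin m → ι, P m M Q * P m Q N = P m M N)
    (hPE : ∀ m, 2 ≤ m → m ≤ k + 2 → ∀ M : Fin m → ι,
      nest bb E m M = ∑ N : Fin m → ι, P m M N • nest bb E m N)
    (hPF : ∀ m, 2 ≤ m → m ≤ k + 2 → ∀ N : Fin m → ι,
      nest bb F m N = ∑ M : Fin m → ι, P m M N • nest bb F m M)
    (hPnest : ∀ m : ℕ, 2 ≤ m + 1 → m + 1 ≤ k + 2 → ∀ M N : Fin (m + 1) → ι,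
      P (m + 1) M N = ∑ A : Fin m → ι, ∑ B : Fin m → ι,
        P m (Fin.tail M) A * P (m + 1) (Fin.cons (M 0) A) (Fin.cons (N 0) B) *
          P m B (Fin.tail N))
    (a : ℕ → ℝ)
    (ha1 : a 1 = 1)
    (hane : ∀ m, 1 ≤ m → m ≤ k + 2 → a m ≠ 0)
    (haP : ∀ m, 2 ≤ m → m ≤ k + 2 → ∀ M N : Fin m → ι,
      form (nest bb E m M) (nest bb F m N) = a m * P m M N) :
    ∀ (M N : Fin (k + 2) → ι),
      bb (nest bb E (k + 2) M) (nest bb F (k + 2) N)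
        = a (k + 2) •
            ∑ Q : Fin (k + 2) → ι, P (k + 2) M Q •
              ∑ i : Fin (k + 2),
                (∏ j ∈ Finset.univ.erase i, (if Q j = N j then (1 : ℝ) else 0)) •
                  bb (E (Q i)) (F (N i)) := by
  -- nests are graded
  have hUE : ∀ m : ℕ, 1 ≤ m → ∀ M : Fin m → ι, nest bb E m M ∈ U (-(m : ℤ)) := by
    intro m
    induction m with
    | zero => omega
    | succ n ih =>
      intro _ M
      cases n with
      | zero => simpa [nest] using hE (M 0)
      | succ n' =>
        have h := hgrade (-1) (-((n' + 1 : ℕ) : ℤ)) (E (M 0))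
          (nest bb E (n' + 1) (fun i => M i.succ)) (hE (M 0)) (ih (by omega) _)
        have harith : (-1 : ℤ) + (-((n' + 1 : ℕ) : ℤ)) = -((n' + 1 + 1 : ℕ) : ℤ) := by
          push_cast; ring
        rw [harith] at h
        exact h
  have hUF : ∀ m : ℕ, 1 ≤ m → ∀ M : Fin m → ι, nest bb F m M ∈ U ((m : ℤ)) := by
    intro m
    induction m with
    | zero => omega
    | succ n ih =>
      intro _ M
      cases n with
      | zero => simpa [nest] using hF (M 0)
      | succ n' =>
        have h := hgrade 1 ((n' + 1 : ℕ) : ℤ) (F (M 0))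
          (nest bb F (n' + 1) (fun i => M i.succ)) (hF (M 0)) (ih (by omega) _)
        have harith : (1 : ℤ) + ((n' + 1 : ℕ) : ℤ) = ((n' + 1 + 1 : ℕ) : ℤ) := by
          push_cast; ring
        rw [harith] at h
        exact h
  -- pairing of nests
  have pair : ∀ m, 1 ≤ m → m ≤ k + 2 → ∀ A B : Fin m → ι,
      form (nest bb E m A) (nest bb F m B) = a m * P m A B := by
    intro m h1 h2 A B
    cases m with
    | zero => omega
    | succ n =>
      cases n with
      | zero =>
        show form (E (A 0)) (F (B 0)) = _
        rw [hEF, hP1, ha1, one_mul]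
      | succ n' => exact haP _ (by omega) h2 A B
  -- idempotency, including m = 1
  have idem : ∀ m, 1 ≤ m → m ≤ k + 2 → ∀ A B : Fin m → ι,
      ∑ Q : Fin m → ι, P m A Q * P m Q B = P m A B := by
    intro m h1 h2 A B
    cases m with
    | zero => omega
    | succ n =>
      cases n with
      | zero =>
        simp only [hP1]
        exact (sum_fun1 (fun q : ι =>
          (if A 0 = q then (1 : ℝ) else 0) * (if q = B 0 then (1 : ℝ) else 0))).trans (by simp)
      | succ n' => exact hPidem _ (by omega) h2 A B
  -- projector invariance of E-nests, including m = 1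
  have hPE' : ∀ m, 1 ≤ m → m ≤ k + 2 → ∀ M : Fin m → ι,
      nest bb E m M = ∑ N : Fin m → ι, P m M N • nest bb E m N := by
    intro m h1 h2 M
    cases m with
    | zero => omega
    | succ n =>
      cases n with
      | zero =>
        simp only [hP1]
        have hs : ∑ B : Fin 1 → ι, (if M 0 = B 0 then (1 : ℝ) else 0) • E (B 0)
            = ∑ q : ι, (if M 0 = q then (1 : ℝ) else 0) • E q :=
          sum_fun1 (fun q : ι => (if M 0 = q then (1 : ℝ) else 0) • E q)
        have he : E (M 0) = ∑ q : ι, (if M 0 = q then (1 : ℝ) else 0) • E q := by simp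
        exact he.trans hs.symm
      | succ n' => exact hPE _ (by omega) h2 M
  -- expansion of elements of U(-m)
  have expandNeg : ∀ m, 1 ≤ m → m ≤ k + 2 → ∀ x, x ∈ U (-(m : ℤ)) →
      x = (a m)⁻¹ • ∑ B : Fin m → ι, (form x (nest bb F m B)) • nest bb E m B := by
    intro m h1 h2 x hx
    set T : V →ₗ[ℝ] V := (a m)⁻¹ •
      ∑ B : Fin m → ι, LinearMap.smulRight (form.flip (nest bb F m B)) (nest bb E m B)
      with hTdef
    have hTapp : ∀ y : V, T y = (a m)⁻¹ • ∑ B : Fin m → ι,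
        (form y (nest bb F m B)) • nest bb E m B := by
      intro y
      rw [hTdef]
      simp only [LinearMap.smul_apply, LinearMap.sum_apply, LinearMap.smulRight_apply,
        LinearMap.flip_apply]
    have hspan : Submodule.span ℝ (Set.range (nest bb E m)) ≤ LinearMap.eqLocus T LinearMap.id := by
      rw [Submodule.span_le]
      rintro _ ⟨A, rfl⟩
      have : T (nest bb E m A) = nest bb E m A := by
        rw [hTapp]
        rw [Finset.sum_congr rfl fun B _ => by rw [pair m h1 h2 A B]]
        simp only [mul_smul]
        rw [← Finset.smul_sum, inv_smul_smul₀ (hane m h1 h2), ← hPE' m h1 h2 A]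
      simpa [LinearMap.mem_eqLocus] using this
    have hx' : T x = x := hspan (hspanE m h1 hx)
    rw [← hTapp, hx']
  -- absorption of a projector through a longer one
  have absorb : ∀ m, 1 ≤ m → m + 1 ≤ k + 2 → ∀ (M : Fin (m + 1) → ι) (n0 : ι) (Q : Fin m → ι),
      ∑ B : Fin m → ι, P (m + 1) M (Fin.cons n0 B) * P m B Q = P (m + 1) M (Fin.cons n0 Q) := by
    intro m h1 h2 M n0 Q
    have hrw : ∀ B : Fin m → ι, P (m + 1) M (Fin.cons n0 B)
        = ∑ A : Fin m → ι, ∑ C : Fin m → ι,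
            P m (Fin.tail M) A * P (m + 1) (Fin.cons (M 0) A) (Fin.cons n0 C) * P m C B := by
      intro B
      rw [hPnest m (by omega) h2 M (Fin.cons n0 B)]
      refine Finset.sum_congr rfl fun A _ => Finset.sum_congr rfl fun C _ => ?_
      rw [Fin.cons_zero, Fin.tail_cons]
    rw [hrw Q]
    rw [Finset.sum_congr rfl fun B _ => by rw [hrw B]]
    simp only [Finset.sum_mul]
    rw [Finset.sum_comm]
    refine Finset.sum_congr rfl fun A _ => ?_
    rw [Finset.sum_comm]
    refine Finset.sum_congr rfl fun C _ => ?_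
    calc ∑ B : Fin m → ι,
          P m (Fin.tail M) A * P (m + 1) (Fin.cons (M 0) A) (Fin.cons n0 C) * P m C B * P m B Q
        = P m (Fin.tail M) A * P (m + 1) (Fin.cons (M 0) A) (Fin.cons n0 C) *
            ∑ B : Fin m → ι, P m C B * P m B Q := by
          rw [Finset.mul_sum]
          exact Finset.sum_congr rfl fun B _ => by ring
      _ = _ := by rw [idem m h1 (by omega) C Q]
  -- the main induction, in "update" form
  have main : ∀ m : ℕ, 1 ≤ m → m ≤ k + 2 → ∀ M N : Fin m → ι,
      bb (nest bb E m M) (nest bb F m N)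
        = a m • ∑ i : Fin m, ∑ q : ι,
            P m M (Function.update N i q) • bb (E q) (F (N i)) := by
    intro m
    induction m with
    | zero => intro h; exact absurd h (by omega)
    | succ n ih =>
      intro _ hle M N
      cases n with
      | zero =>
        rw [ha1, one_smul, Fin.sum_univ_one]
        have hup : ∀ q : ι, P 1 M (Function.update N 0 q) = if M 0 = q then (1 : ℝ) else 0 := by
          intro q
          rw [hP1, Function.update_self]
        rw [Finset.sum_congr rfl fun q _ => by rw [hup q]]
        show bb (E (M 0)) (F (N 0)) = _
        simp [ite_smul]
      | succ n' =>
        have h1' : 1 ≤ n' + 1 := by omega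
        have hle' : n' + 1 ≤ k + 2 := by omega
        -- memberships
        have hEM : nest bb E (n' + 1 + 1) M ∈ U (-((n' + 1 + 1 : ℕ) : ℤ)) := hUE _ (by omega) M
        have hFr : nest bb F (n' + 1) (Fin.tail N) ∈ U ((n' + 1 : ℕ) : ℤ) := hUF _ h1' _
        -- Jacobi splitting
        have hjaceq := hjac (-((n' + 1 + 1 : ℕ) : ℤ)) 1 (nest bb E (n' + 1 + 1) M) (F (N 0))
          (nest bb F (n' + 1) (Fin.tail N)) hEM (hF (N 0))
        have hsplit : bb (nest bb E (n' + 1 + 1) M) (nest bb F (n' + 1 + 1) N)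
            = bb (bb (nest bb E (n' + 1 + 1) M) (F (N 0))) (nest bb F (n' + 1) (Fin.tail N))
              + ((-1 : ℝ) ^ ((-((n' + 1 + 1 : ℕ) : ℤ)) * 1)) •
                bb (F (N 0)) (bb (nest bb E (n' + 1 + 1) M) (nest bb F (n' + 1) (Fin.tail N))) := by
          have hN : nest bb F (n' + 1 + 1) N
              = bb (F (N 0)) (nest bb F (n' + 1) (Fin.tail N)) := rfl
          rw [hN, hjaceq]
          abel
        -- sign bookkeeping
        have hneg1 : (-1 : ℝ) ≠ 0 := by norm_num
        have hsign : ((-1 : ℝ) ^ ((-((n' + 1 + 1 : ℕ) : ℤ)) * 1)) *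
              (-((-1 : ℝ) ^ (((n' + 1 : ℕ) : ℤ) * 1))) *
              (-((-1 : ℝ) ^ ((1 : ℤ) * (-1 : ℤ)))) = 1 := by
          calc ((-1 : ℝ) ^ ((-((n' + 1 + 1 : ℕ) : ℤ)) * 1)) *
                (-((-1 : ℝ) ^ (((n' + 1 : ℕ) : ℤ) * 1))) *
                (-((-1 : ℝ) ^ ((1 : ℤ) * (-1 : ℤ))))
              = ((-1 : ℝ) ^ ((-((n' + 1 + 1 : ℕ) : ℤ)) * 1)) *
                ((-1 : ℝ) ^ (((n' + 1 : ℕ) : ℤ) * 1)) *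
                ((-1 : ℝ) ^ ((1 : ℤ) * (-1 : ℤ))) := by ring
            _ = (-1 : ℝ) ^ ((-((n' + 1 + 1 : ℕ) : ℤ)) * 1 + ((n' + 1 : ℕ) : ℤ) * 1
                  + (1 : ℤ) * (-1 : ℤ)) := by
                rw [← zpow_add₀ hneg1, ← zpow_add₀ hneg1]
            _ = (-1 : ℝ) ^ (-2 : ℤ) := by
                congr 1
                push_cast
                ring
            _ = 1 := by norm_num
        -- Term A : the first piece of the Jacobi splitting
        have hX : bb (nest bb E (n' + 1 + 1) M) (F (N 0)) ∈ U (-((n' + 1 : ℕ) : ℤ)) := by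
          have h := hgrade _ _ _ _ hEM (hF (N 0))
          have harith : (-((n' + 1 + 1 : ℕ) : ℤ)) + 1 = -((n' + 1 : ℕ) : ℤ) := by
            push_cast; ring
          rwa [harith] at h
        have hXform : ∀ B : Fin (n' + 1) → ι,
            form (bb (nest bb E (n' + 1 + 1) M) (F (N 0))) (nest bb F (n' + 1) B)
              = a (n' + 1 + 1) * P (n' + 1 + 1) M (Fin.cons (N 0) B) := by
          intro B
          rw [hforminv, ← nest_cons bb F (n' + 1) h1' (N 0) B]
          exact pair (n' + 1 + 1) (by omega) hle M (Fin.cons (N 0) B)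
        have hXeq : bb (nest bb E (n' + 1 + 1) M) (F (N 0))
            = (a (n' + 1))⁻¹ • ∑ B : Fin (n' + 1) → ι,
                (a (n' + 1 + 1) * P (n' + 1 + 1) M (Fin.cons (N 0) B)) • nest bb E (n' + 1) B := by
          rw [expandNeg (n' + 1) h1' hle' _ hX]
          congr 1
          exact Finset.sum_congr rfl fun B _ => by rw [hXform B]
        have key : ∀ (i' : Fin (n' + 1)) (q : ι),
            ∑ B : Fin (n' + 1) → ι, P (n' + 1 + 1) M (Fin.cons (N 0) B) *
                P (n' + 1) B (Function.update (Fin.tail N) i' q)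
              = P (n' + 1 + 1) M (Function.update N i'.succ q) := by
          intro i' q
          rw [absorb (n' + 1) h1' hle M (N 0) (Function.update (Fin.tail N) i' q),
            cons_update]
        have hTermA : bb (bb (nest bb E (n' + 1 + 1) M) (F (N 0))) (nest bb F (n' + 1) (Fin.tail N))
            = a (n' + 1 + 1) • ∑ i' : Fin (n' + 1), ∑ q : ι,
                P (n' + 1 + 1) M (Function.update N i'.succ q) • bb (E q) (F (N i'.succ)) := by
          rw [hXeq]
          simp only [LinearMap.map_smul₂, map_sum, LinearMap.sum_apply, LinearMap.smul_apply]
          rw [Finset.sum_congr rfl fun B _ => by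
            rw [ih h1' hle' B (Fin.tail N)]]
          simp only [smul_smul, Finset.smul_sum]
          conv_lhs => rw [Finset.sum_comm]
          refine Finset.sum_congr rfl fun i' _ => ?_
          conv_lhs => rw [Finset.sum_comm]
          refine Finset.sum_congr rfl fun q _ => ?_
          rw [← Finset.sum_smul]
          congr 1
          rw [← key i' q, Finset.mul_sum]
          refine Finset.sum_congr rfl fun B _ => ?_
          have hne' : a (n' + 1) ≠ 0 := hane (n' + 1) h1' hle'
          field_simp
        -- Term B : the second piece of the Jacobi splitting
        have hY : bb (nest bb E (n' + 1 + 1) M) (nest bb F (n' + 1) (Fin.tail N)) ∈ U (-1) := by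
          have h := hgrade _ _ _ _ hEM hFr
          have harith : (-((n' + 1 + 1 : ℕ) : ℤ)) + ((n' + 1 : ℕ) : ℤ) = -1 := by
            push_cast; ring
          rwa [harith] at h
        have hYform : ∀ B : Fin 1 → ι,
            form (bb (nest bb E (n' + 1 + 1) M) (nest bb F (n' + 1) (Fin.tail N))) (nest bb F 1 B)
              = (-((-1 : ℝ) ^ (((n' + 1 : ℕ) : ℤ) * 1))) *
                  (a (n' + 1 + 1) * P (n' + 1 + 1) M (Fin.cons (B 0) (Fin.tail N))) := by
          intro B
          have h0 : nest bb F 1 B = F (B 0) := rfl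
          rw [h0, hforminv, hanti ((n' + 1 : ℕ) : ℤ) 1 _ _ hFr (hF (B 0)), map_smul,
            smul_eq_mul]
          congr 1
          rw [← nest_cons bb F (n' + 1) h1' (B 0) (Fin.tail N)]
          exact pair (n' + 1 + 1) (by omega) hle M (Fin.cons (B 0) (Fin.tail N))
        have hYeq : bb (nest bb E (n' + 1 + 1) M) (nest bb F (n' + 1) (Fin.tail N))
            = ∑ B : Fin 1 → ι,
                ((-((-1 : ℝ) ^ (((n' + 1 : ℕ) : ℤ) * 1))) *
                  (a (n' + 1 + 1) * P (n' + 1 + 1) M (Fin.cons (B 0) (Fin.tail N)))) •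
                    nest bb E 1 B := by
          rw [expandNeg 1 (by omega) (by omega) _ hY, ha1, inv_one, one_smul]
          exact Finset.sum_congr rfl fun B _ => by rw [hYform B]
        have hTermB : ((-1 : ℝ) ^ ((-((n' + 1 + 1 : ℕ) : ℤ)) * 1)) •
              bb (F (N 0)) (bb (nest bb E (n' + 1 + 1) M) (nest bb F (n' + 1) (Fin.tail N)))
            = a (n' + 1 + 1) • ∑ q : ι,
                P (n' + 1 + 1) M (Function.update N 0 q) • bb (E q) (F (N 0)) := by
          rw [hYeq, map_sum, Finset.smul_sum]
          conv_rhs => rw [Finset.smul_sum]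
          have hterm : ∀ B : Fin 1 → ι,
              ((-1 : ℝ) ^ ((-((n' + 1 + 1 : ℕ) : ℤ)) * 1)) •
                  bb (F (N 0)) ((((-((-1 : ℝ) ^ (((n' + 1 : ℕ) : ℤ) * 1))) *
                    (a (n' + 1 + 1) * P (n' + 1 + 1) M (Fin.cons (B 0) (Fin.tail N))))) •
                      nest bb E 1 B)
                = a (n' + 1 + 1) •
                    (P (n' + 1 + 1) M (Function.update N 0 (B 0)) • bb (E (B 0)) (F (N 0))) := by
            intro B
            have h0 : nest bb E 1 B = E (B 0) := rfl
            rw [h0, map_smul, hanti 1 (-1) (F (N 0)) (E (B 0)) (hF (N 0)) (hE (B 0)),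
              cons_tail_update0]
            simp only [smul_smul]
            congr 1
            linear_combination
              (a (n' + 1 + 1) * P (n' + 1 + 1) M (Function.update N 0 (B 0))) * hsign
          rw [Finset.sum_congr rfl fun B _ => hterm B]
          exact sum_fun1 (fun q : ι => a (n' + 1 + 1) •
            (P (n' + 1 + 1) M (Function.update N 0 q) • bb (E q) (F (N 0))))
        -- assemble
        rw [hsplit, hTermA, hTermB]
        conv_rhs => rw [Fin.sum_univ_succ]
        rw [smul_add, add_comm]
  -- conclude
  intro M N
  rw [main (k + 2) (by omega) le_rfl M N]
  congr 1
  have hQ : ∀ Q : Fin (k + 2) → ι,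
      P (k + 2) M Q • ∑ i : Fin (k + 2),
          (∏ j ∈ Finset.univ.erase i, (if Q j = N j then (1 : ℝ) else 0)) •
            bb (E (Q i)) (F (N i))
        = ∑ i : Fin (k + 2),
            (∏ j ∈ Finset.univ.erase i, (if Q j = N j then (1 : ℝ) else 0)) •
              (P (k + 2) M Q • bb (E (Q i)) (F (N i))) := by
    intro Q
    rw [Finset.smul_sum]
    exact Finset.sum_congr rfl fun i _ => smul_comm _ _ _
  rw [Finset.sum_congr rfl fun Q _ => hQ Q]
  conv_rhs => rw [Finset.sum_comm]
  refine Finset.sum_congr rfl fun i _ => ?_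
  rw [sum_delta i N (fun Q => P (k + 2) M Q • bb (E (Q i)) (F (N i)))]
  exact Finset.sum_congr rfl fun q _ => by rw [Function.update_self]
end

section
/- Let p ≥ 2 be an integer. Assume there exist nonzero real numbers a_1 = 1, a_2, …, a_p such that ⟨E_{M1⋯Mk} | F^{N1⋯Nk}⟩ = a_k (ℙ_k)_{M1⋯Mk}^{N1⋯Nk} for k = 2, …, p. For 1 ≤ k ≤ p define 𝚇_{M|N1⋯Nk}^{P1⋯Pk} = (1/a_k) ⟦E_M, ⟦E_{N1⋯Nk}, F^{P1⋯Pk}⟧⟧ ∈ U_{−1} (so 𝚇_{M|N}^{P} = ⟦E_M, ⟦E_N, F^P⟧⟧). Then for all indices M, N1, …, Np, P1, …, Pp: 𝚇_{M|N1⋯Np}^{P1⋯Pp} = Σ_{Q1,…,Qp} (ℙ_p)_{Q1⋯Qp}^{P1⋯Pp} Σ_{i=1}^{p} δ_{N1}^{Q1} ⋯ δ_{N(i−1)}^{Q(i−1)} 𝚇_{M|Ni}^{Qi} δ_{N(i+1)}^{Q(i+1)} ⋯ δ_{Np}^{Qp}, an identity in U_{−1}. -/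
lemma nest_two {V : Type} [AddCommGroup V] [Module ℝ V] {ι : Type}
    (bb : V →ₗ[ℝ] V →ₗ[ℝ] V) (f : ι → V) (m : ℕ) (M : Fin (m + 1 + 1) → ι) :
    nest bb f (m + 1 + 1) M = bb (f (M 0)) (nest bb f (m + 1) (Fin.tail M)) := rfl

lemma update_zero {ι : Type} {n : ℕ} (N : Fin (n + 1) → ι) (t : ι) :
    Function.update N 0 t = Fin.cons t (Fin.tail N) := by
  funext j
  cases j using Fin.cases with
  | zero => simp
  | succ i => simp [Function.update_of_ne (Fin.succ_ne_zero i), Fin.tail]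

lemma update_succ {ι : Type} [DecidableEq ι] {n : ℕ} (N : Fin (n + 1) → ι) (i : Fin n) (u : ι) :
    Function.update N i.succ u = Fin.cons (N 0) (Function.update (Fin.tail N) i u) := by
  funext j
  cases j using Fin.cases with
  | zero => rw [Fin.cons_zero, Function.update_of_ne (Fin.succ_ne_zero i).symm]
  | succ l =>
    rw [Fin.cons_succ]
    rcases eq_or_ne l i with rfl | h
    · simp
    · rw [Function.update_of_ne h, Function.update_of_ne (fun hh => h (Fin.succ_injective _ hh))]
      rfl

lemma collapse {V : Type} [AddCommGroup V] [Module ℝ V] {ι : Type} [Fintype ι] [DecidableEq ι]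
    {m : ℕ} (g : (Fin m → ι) → V) (N : Fin m → ι) (i : Fin m) :
    ∑ Q : Fin m → ι,
      (∏ j ∈ Finset.univ.erase i, (if N j = Q j then (1 : ℝ) else 0)) • g Q
      = ∑ t : ι, g (Function.update N i t) := by
  have h1 : ∀ Q : Fin m → ι,
      (∏ j ∈ Finset.univ.erase i, (if N j = Q j then (1 : ℝ) else 0)) • g Q
      = if (∀ j ∈ Finset.univ.erase i, N j = Q j) then g Q else 0 := by
    intro Q
    rw [Finset.prod_boole]
    split <;> simp
  simp_rw [h1]
  rw [← Finset.sum_filter]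
  have h2 : Finset.univ.filter (fun Q : Fin m → ι => ∀ j ∈ Finset.univ.erase i, N j = Q j)
      = Finset.image (fun t => Function.update N i t) Finset.univ := by
    ext Q
    simp only [Finset.mem_filter, Finset.mem_univ, true_and, Finset.mem_image,
      Finset.mem_erase, ne_eq]
    constructor
    · intro h
      refine ⟨Q i, funext fun j => ?_⟩
      rcases eq_or_ne j i with rfl | hj
      · simp
      · rw [Function.update_of_ne hj]
        exact h j ⟨hj, trivial⟩
    · rintro ⟨t, rfl⟩ j ⟨hj, -⟩
      rw [Function.update_of_ne hj]
  rw [h2, Finset.sum_image]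
  intro x _ y _ hxy
  have := congrFun hxy i
  simpa using this

/-- With `𝚇_{M|N1⋯Nk}^{P1⋯Pk} = (1/a_k) ⟦E_M, ⟦E_{N1⋯Nk}, F^{P1⋯Pk}⟧⟧`
(and `p = k + 2 ≥ 2`):
`𝚇_{M|N1⋯Np}^{P1⋯Pp} = Σ_Q (ℙ_p)_{Q1⋯Qp}{}^{P1⋯Pp} Σ_i δ_{N1}^{Q1} ⋯ 𝚇_{M|Ni}^{Qi} ⋯ δ_{Np}^{Qp}`. -/
theorem X_recursion
    {V : Type} [AddCommGroup V] [Module ℝ V]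
    (U : ℤ → Submodule ℝ V)
    (bb : V →ₗ[ℝ] V →ₗ[ℝ] V)
    (form : V →ₗ[ℝ] V →ₗ[ℝ] ℝ)
    (hgrade : ∀ (p q : ℤ) (x y : V), x ∈ U p → y ∈ U q → bb x y ∈ U (p + q))
    (hanti : ∀ (p q : ℤ) (x y : V), x ∈ U p → y ∈ U q →
      bb x y = (-((-1 : ℝ) ^ (p * q))) • bb y x)
    (hjac : ∀ (p q : ℤ) (x y z : V), x ∈ U p → y ∈ U q →
      bb (bb x y) z = bb x (bb y z) - ((-1 : ℝ) ^ (p * q)) • bb y (bb x z))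
    (hform0 : ∀ (p q : ℤ) (x y : V), x ∈ U p → y ∈ U q → p + q ≠ 0 → form x y = 0)
    (hforminv : ∀ x y z : V, form (bb x y) z = form x (bb y z))
    {ι : Type} [Fintype ι] [DecidableEq ι]
    (E F : ι → V)
    (hE : ∀ M, E M ∈ U (-1))
    (hF : ∀ M, F M ∈ U 1)
    (hEF : ∀ M N, form (E M) (F N) = if M = N then (1 : ℝ) else 0)
    (hspanE : ∀ m : ℕ, 1 ≤ m → U (-(m : ℤ)) ≤ Submodule.span ℝ (Set.range (nest bb E m)))
    (hspanF : ∀ m : ℕ, 1 ≤ m → U (m : ℤ) ≤ Submodule.span ℝ (Set.range (nest bb F m)))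
    (k : ℕ)
    (P : (m : ℕ) → (Fin m → ι) → (Fin m → ι) → ℝ)
    (hP1 : ∀ M N : Fin 1 → ι, P 1 M N = if M 0 = N 0 then (1 : ℝ) else 0)
    (hPidem : ∀ m, 2 ≤ m → m ≤ k + 2 → ∀ M N : Fin m → ι,
      ∑ Q : Fin m → ι, P m M Q * P m Q N = P m M N)
    (hPE : ∀ m, 2 ≤ m → m ≤ k + 2 → ∀ M : Fin m → ι,
      nest bb E m M = ∑ N : Fin m → ι, P m M N • nest bb E m N)
    (hPF : ∀ m, 2 ≤ m → m ≤ k + 2 → ∀ N : Fin m → ι,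
      nest bb F m N = ∑ M : Fin m → ι, P m M N • nest bb F m M)
    (hPnest : ∀ m : ℕ, 2 ≤ m + 1 → m + 1 ≤ k + 2 → ∀ M N : Fin (m + 1) → ι,
      P (m + 1) M N = ∑ A : Fin m → ι, ∑ B : Fin m → ι,
        P m (Fin.tail M) A * P (m + 1) (Fin.cons (M 0) A) (Fin.cons (N 0) B) *
          P m B (Fin.tail N))
    (a : ℕ → ℝ)
    (ha1 : a 1 = 1)
    (hane : ∀ m, 1 ≤ m → m ≤ k + 2 → a m ≠ 0)
    (haP : ∀ m, 2 ≤ m → m ≤ k + 2 → ∀ M N : Fin m → ι,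
      form (nest bb E m M) (nest bb F m N) = a m * P m M N) :
    ∀ (M : ι) (N Pt : Fin (k + 2) → ι),
      (a (k + 2))⁻¹ • bb (E M) (bb (nest bb E (k + 2) N) (nest bb F (k + 2) Pt))
        = ∑ Q : Fin (k + 2) → ι, P (k + 2) Q Pt •
            ∑ i : Fin (k + 2),
              (∏ j ∈ Finset.univ.erase i, (if N j = Q j then (1 : ℝ) else 0)) •
                ((a 1)⁻¹ • bb (E M) (bb (E (N i)) (F (Q i)))) := by
  -- gradings of nested brackets
  have hnE : ∀ (l : ℕ) (T : Fin (l + 1) → ι), nest bb E (l + 1) T ∈ U (-((l : ℤ) + 1)) := by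
    intro l
    induction l with
    | zero => intro T; simpa [nest] using hE (T 0)
    | succ l ih =>
      intro T
      have h := hgrade (-1) (-((l : ℤ) + 1)) (E (T 0)) (nest bb E (l + 1) (Fin.tail T))
        (hE _) (ih _)
      rw [nest_two]
      have he : (-1 : ℤ) + -((l : ℤ) + 1) = -(((l : ℕ) + 1 : ℕ) + 1) := by push_cast; ring
      rw [he] at h
      exact h
  have hnF : ∀ (l : ℕ) (T : Fin (l + 1) → ι), nest bb F (l + 1) T ∈ U ((l : ℤ) + 1) := by
    intro l
    induction l with
    | zero => intro T; simpa [nest] using hF (T 0)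
    | succ l ih =>
      intro T
      have h := hgrade 1 ((l : ℤ) + 1) (F (T 0)) (nest bb F (l + 1) (Fin.tail T)) (hF _) (ih _)
      rw [nest_two]
      have he : (1 : ℤ) + ((l : ℤ) + 1) = (((l : ℕ) + 1 : ℕ) : ℤ) + 1 := by push_cast; ring
      rw [he] at h
      exact h
  -- resolution of an element of U 1
  have hrangeF1 : Set.range (nest bb F 1) = Set.range F := by
    ext u; constructor
    · rintro ⟨T, rfl⟩; exact ⟨T 0, rfl⟩
    · rintro ⟨t, rfl⟩; exact ⟨fun _ => t, rfl⟩
  have hRes1 : ∀ x : V, x ∈ U 1 → x = ∑ t : ι, (form (E t) x) • F t := by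
    intro x hx
    have hx' : x ∈ Submodule.span ℝ (Set.range F) := by
      rw [← hrangeF1]
      exact hspanF 1 le_rfl (by simpa using hx)
    obtain ⟨c, hc⟩ := (Submodule.mem_span_range_iff_exists_fun ℝ).mp hx'
    have hf : ∀ t, form (E t) x = c t := by
      intro t
      rw [← hc, map_sum]
      simp_rw [map_smul, hEF, smul_eq_mul, mul_ite, mul_one, mul_zero]
      simp
    simp_rw [hf]
    exact hc.symm
  -- unified a*P pairing
  have haP' : ∀ m, 1 ≤ m → m ≤ k + 2 → ∀ S T : Fin m → ι,
      form (nest bb E m S) (nest bb F m T) = a m * P m S T := by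
    intro m hm1 hm2 S T
    rcases m with _ | (_ | m)
    · omega
    · show form (E (S 0)) (F (T 0)) = a 1 * P 1 S T
      rw [hEF, ha1, hP1, one_mul]
    · exact haP (m + 2) (by omega) hm2 S T
  -- unified projector invariance of F-nests
  have hPF' : ∀ m, 1 ≤ m → m ≤ k + 2 → ∀ T : Fin m → ι,
      nest bb F m T = ∑ S : Fin m → ι, P m S T • nest bb F m S := by
    intro m hm1 hm2 T
    rcases m with _ | (_ | m)
    · omega
    · symm
      show ∑ S : Fin 1 → ι, P 1 S T • F (S 0) = F (T 0)
      simp_rw [hP1]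
      rw [Finset.sum_eq_single ((fun _ => T 0) : Fin 1 → ι)]
      · simp
      · intro S _ hS
        have hne : ¬ (S 0 = T 0) := fun h => hS (funext fun j => by rw [Fin.eq_zero j]; exact h)
        simp [hne]
      · simp
    · exact hPF (m + 2) (by omega) hm2 T
  -- resolution of an element of U m
  have hResU : ∀ m, 1 ≤ m → m ≤ k + 2 → ∀ x : V, x ∈ U (m : ℤ) →
      x = ∑ T : Fin m → ι, ((a m)⁻¹ * form (nest bb E m T) x) • nest bb F m T := by
    intro m hm1 hm2 x hx
    obtain ⟨c, hc⟩ := (Submodule.mem_span_range_iff_exists_fun ℝ).mp (hspanF m hm1 hx)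
    have hcoef : ∀ T, form (nest bb E m T) x = ∑ S, c S * (a m * P m T S) := by
      intro T
      rw [← hc, map_sum]
      simp_rw [map_smul, haP' m hm1 hm2, smul_eq_mul]
    have h0 := hane m hm1 hm2
    calc x = ∑ S, c S • nest bb F m S := hc.symm
      _ = ∑ S, c S • (∑ T, P m T S • nest bb F m T) := by
          refine Finset.sum_congr rfl fun S _ => ?_
          rw [← hPF' m hm1 hm2]
      _ = ∑ T : Fin m → ι, ((a m)⁻¹ * form (nest bb E m T) x) • nest bb F m T := by
          simp_rw [hcoef, Finset.smul_sum, Finset.mul_sum, Finset.sum_smul]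
          rw [Finset.sum_comm]
          refine Finset.sum_congr rfl fun T _ => Finset.sum_congr rfl fun S _ => ?_
          rw [smul_smul]
          congr 1
          field_simp
  -- Claim C: projector contraction
  have hC : ∀ n, 1 ≤ n → n + 1 ≤ k + 2 → ∀ (S : Fin n → ι) (N0 : ι) (Pt : Fin (n + 1) → ι),
      ∑ T : Fin n → ι, P (n + 1) (Fin.cons N0 T) Pt * P n S T
        = P (n + 1) (Fin.cons N0 S) Pt := by
    intro n hn1 hn2 S N0 Pt
    have hidem : ∀ (S A : Fin n → ι), ∑ T : Fin n → ι, P n S T * P n T A = P n S A := by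
      rcases n with _ | (_ | n)
      · omega
      · intro S A
        simp_rw [hP1]
        rw [Finset.sum_eq_single ((fun _ => S 0) : Fin 1 → ι)]
        · simp
        · intro T _ hT
          have hne : ¬ (S 0 = T 0) :=
            fun h => hT (funext fun j => by rw [Fin.eq_zero j]; exact h.symm)
          simp [hne]
        · simp
      · exact hPidem (n + 2) (by omega) (by omega)
    have e1 : ∀ T : Fin n → ι, P (n + 1) (Fin.cons N0 T) Pt
        = ∑ A, ∑ B, P n T A * P (n + 1) (Fin.cons N0 A) (Fin.cons (Pt 0) B)
            * P n B (Fin.tail Pt) := by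
      intro T
      rw [hPnest n (by omega) hn2]
      simp
    have e2 : P (n + 1) (Fin.cons N0 S) Pt
        = ∑ A, ∑ B, P n S A * P (n + 1) (Fin.cons N0 A) (Fin.cons (Pt 0) B)
            * P n B (Fin.tail Pt) := by
      rw [hPnest n (by omega) hn2]
      simp
    rw [e2]
    simp_rw [e1, Finset.sum_mul]
    rw [Finset.sum_comm]
    refine Finset.sum_congr rfl fun A _ => ?_
    rw [Finset.sum_comm]
    refine Finset.sum_congr rfl fun B _ => ?_
    calc ∑ T : Fin n → ι, P n T A * P (n + 1) (Fin.cons N0 A) (Fin.cons (Pt 0) B)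
            * P n B (Fin.tail Pt) * P n S T
        = ∑ T : Fin n → ι, (P n S T * P n T A)
            * (P (n + 1) (Fin.cons N0 A) (Fin.cons (Pt 0) B) * P n B (Fin.tail Pt)) :=
          Finset.sum_congr rfl fun T _ => by ring
      _ = (∑ T : Fin n → ι, P n S T * P n T A)
            * (P (n + 1) (Fin.cons N0 A) (Fin.cons (Pt 0) B) * P n B (Fin.tail Pt)) := by
          rw [Finset.sum_mul]
      _ = P n S A * P (n + 1) (Fin.cons N0 A) (Fin.cons (Pt 0) B) * P n B (Fin.tail Pt) := by
          rw [hidem S A]; ring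
  intro M N Pt
  -- main induction
  have main : ∀ n, 1 ≤ n → n ≤ k + 2 → ∀ (N Pt : Fin n → ι),
      (a n)⁻¹ • bb (E M) (bb (nest bb E n N) (nest bb F n Pt))
        = ∑ i : Fin n, ∑ t : ι,
            P n (Function.update N i t) Pt • bb (E M) (bb (E (N i)) (F t)) := by
    intro n hn
    induction n, hn using Nat.le_induction with
    | base =>
      intro _ N Pt
      show (a 1)⁻¹ • bb (E M) (bb (E (N 0)) (F (Pt 0))) = _
      rw [ha1, inv_one, one_smul, Fin.sum_univ_one]
      simp_rw [hP1, Function.update_self]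
      have hite : ∀ t : ι, ((if t = Pt 0 then (1 : ℝ) else 0) • bb (E M) (bb (E (N 0)) (F t)))
          = if t = Pt 0 then bb (E M) (bb (E (N 0)) (F t)) else 0 := by
        intro t; split <;> simp
      rw [Finset.sum_congr rfl fun t _ => hite t,
        Finset.sum_ite_eq' Finset.univ (Pt 0) (fun t => bb (E M) (bb (E (N 0)) (F t)))]
      simp
    | succ n hn1 ih =>
      intro hle N Pt
      obtain ⟨m, rfl⟩ : ∃ m, n = m + 1 := ⟨n - 1, by omega⟩
      have hapne := hane (m + 1 + 1) (by omega) hle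
      have hanne := hane (m + 1) (by omega) (by omega)
      have hεcases : ((-1 : ℝ) ^ ((m : ℤ) + 1)) = 1 ∨ ((-1 : ℝ) ^ ((m : ℤ) + 1)) = -1 := by
        rcases Int.even_or_odd ((m : ℤ) + 1) with h | h
        · exact Or.inl (Even.neg_one_zpow h)
        · exact Or.inr (Odd.neg_one_zpow h)
      set FP := nest bb F (m + 1 + 1) Pt with hFPdef
      have hFPmem : FP ∈ U (((m + 1 : ℕ) : ℤ) + 1) := hnF (m + 1) Pt
      -- Jacobi splitting
      have hJ : bb (nest bb E (m + 1 + 1) N) FP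
          = bb (E (N 0)) (bb (nest bb E (m + 1) (Fin.tail N)) FP)
            - ((-1 : ℝ) ^ ((m : ℤ) + 1)) •
                bb (nest bb E (m + 1) (Fin.tail N)) (bb (E (N 0)) FP) := by
        rw [nest_two bb E m N]
        have h := hjac (-1) (-((m : ℤ) + 1)) (E (N 0)) (nest bb E (m + 1) (Fin.tail N)) FP
          (hE _) (hnE m (Fin.tail N))
        have he : (-1 : ℤ) * -((m : ℤ) + 1) = (m : ℤ) + 1 := by ring
        rwa [he] at h
      -- W-part
      have hWmem : bb (nest bb E (m + 1) (Fin.tail N)) FP ∈ U 1 := by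
        have h := hgrade (-((m : ℤ) + 1)) (((m + 1 : ℕ) : ℤ) + 1) _ _
          (hnE m (Fin.tail N)) hFPmem
        have he : -((m : ℤ) + 1) + (((m + 1 : ℕ) : ℤ) + 1) = 1 := by push_cast; ring
        rwa [he] at h
      have hWcoef : ∀ t : ι, form (E t) (bb (nest bb E (m + 1) (Fin.tail N)) FP)
          = a (m + 1 + 1) * P (m + 1 + 1) (Fin.cons t (Fin.tail N)) Pt := by
        intro t
        rw [← hforminv]
        have hbt : bb (E t) (nest bb E (m + 1) (Fin.tail N))
            = nest bb E (m + 1 + 1) (Fin.cons t (Fin.tail N)) := by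
          simp [nest_two]
        rw [hbt, hFPdef]
        exact haP (m + 1 + 1) (by omega) hle _ _
      have hterm1 : (a (m + 1 + 1))⁻¹ •
            bb (E M) (bb (E (N 0)) (bb (nest bb E (m + 1) (Fin.tail N)) FP))
          = ∑ t : ι, P (m + 1 + 1) (Fin.cons t (Fin.tail N)) Pt •
              bb (E M) (bb (E (N 0)) (F t)) := by
        conv_lhs => rw [hRes1 _ hWmem]
        rw [map_sum, map_sum, Finset.smul_sum]
        refine Finset.sum_congr rfl fun t _ => ?_
        rw [map_smul, map_smul, hWcoef, smul_smul]
        congr 1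
        rw [← mul_assoc, inv_mul_cancel₀ hapne, one_mul]
      -- D-part
      have hDmem : bb (E (N 0)) FP ∈ U ((m + 1 : ℕ) : ℤ) := by
        have h := hgrade (-1) (((m + 1 : ℕ) : ℤ) + 1) (E (N 0)) FP (hE _) hFPmem
        have he : (-1 : ℤ) + (((m + 1 : ℕ) : ℤ) + 1) = ((m + 1 : ℕ) : ℤ) := by push_cast; ring
        rwa [he] at h
      have hDcoef : ∀ T : Fin (m + 1) → ι,
          form (nest bb E (m + 1) T) (bb (E (N 0)) FP)
          = (-((-1 : ℝ) ^ ((m : ℤ) + 1))) *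
              (a (m + 1 + 1) * P (m + 1 + 1) (Fin.cons (N 0) T) Pt) := by
        intro T
        rw [← hforminv]
        have hflip : bb (nest bb E (m + 1) T) (E (N 0))
            = (-((-1 : ℝ) ^ ((m : ℤ) + 1))) • nest bb E (m + 1 + 1) (Fin.cons (N 0) T) := by
          have h := hanti (-((m : ℤ) + 1)) (-1) (nest bb E (m + 1) T) (E (N 0))
            (hnE m T) (hE _)
          have he : -((m : ℤ) + 1) * -1 = (m : ℤ) + 1 := by ring
          rw [he] at h
          rw [h, nest_two bb E m (Fin.cons (N 0) T), Fin.cons_zero, Fin.tail_cons]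
        rw [hflip, map_smul, LinearMap.smul_apply, smul_eq_mul]
        congr 1
        rw [hFPdef]
        exact haP (m + 1 + 1) (by omega) hle _ _
      have hIH : ∀ T : Fin (m + 1) → ι,
          bb (E M) (bb (nest bb E (m + 1) (Fin.tail N)) (nest bb F (m + 1) T))
          = a (m + 1) • ∑ i : Fin (m + 1), ∑ u : ι,
              P (m + 1) (Function.update (Fin.tail N) i u) T •
                bb (E M) (bb (E (Fin.tail N i)) (F u)) := by
        intro T
        rw [← ih (by omega) (Fin.tail N) T, smul_smul,
          mul_inv_cancel₀ hanne, one_smul]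
      have hDapp : bb (E M) (bb (nest bb E (m + 1) (Fin.tail N)) (bb (E (N 0)) FP))
          = ∑ T : Fin (m + 1) → ι, ∑ i : Fin (m + 1), ∑ u : ι,
              ((((a (m + 1))⁻¹ * ((-((-1 : ℝ) ^ ((m : ℤ) + 1))) *
                  (a (m + 1 + 1) * P (m + 1 + 1) (Fin.cons (N 0) T) Pt))) * a (m + 1)) *
                P (m + 1) (Function.update (Fin.tail N) i u) T) •
              bb (E M) (bb (E (Fin.tail N i)) (F u)) := by
        conv_lhs => rw [hResU (m + 1) (by omega) (by omega) _ hDmem]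
        rw [map_sum, map_sum]
        refine Finset.sum_congr rfl fun T _ => ?_
        rw [map_smul, map_smul, hDcoef, hIH, smul_smul, Finset.smul_sum]
        refine Finset.sum_congr rfl fun i _ => ?_
        rw [Finset.smul_sum]
        refine Finset.sum_congr rfl fun u _ => ?_
        rw [smul_smul]
      have hterm2 : (a (m + 1 + 1))⁻¹ • (((-1 : ℝ) ^ ((m : ℤ) + 1)) •
            bb (E M) (bb (nest bb E (m + 1) (Fin.tail N)) (bb (E (N 0)) FP)))
          = ∑ i : Fin (m + 1), ∑ u : ι,
              (-(P (m + 1 + 1) (Fin.cons (N 0) (Function.update (Fin.tail N) i u)) Pt)) •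
                bb (E M) (bb (E (Fin.tail N i)) (F u)) := by
        rw [hDapp, smul_smul, Finset.smul_sum]
        simp_rw [Finset.smul_sum, smul_smul]
        rw [Finset.sum_comm]
        refine Finset.sum_congr rfl fun i _ => ?_
        rw [Finset.sum_comm]
        refine Finset.sum_congr rfl fun u _ => ?_
        rw [← Finset.sum_smul]
        congr 1
        have hCC := hC (m + 1) (by omega) hle (Function.update (Fin.tail N) i u) (N 0) Pt
        calc ∑ T : Fin (m + 1) → ι, (a (m + 1 + 1))⁻¹ * ((-1 : ℝ) ^ ((m : ℤ) + 1)) *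
                ((((a (m + 1))⁻¹ * ((-((-1 : ℝ) ^ ((m : ℤ) + 1))) *
                    (a (m + 1 + 1) * P (m + 1 + 1) (Fin.cons (N 0) T) Pt))) * a (m + 1)) *
                  P (m + 1) (Function.update (Fin.tail N) i u) T)
            = ∑ T : Fin (m + 1) → ι, -(P (m + 1 + 1) (Fin.cons (N 0) T) Pt *
                P (m + 1) (Function.update (Fin.tail N) i u) T) := by
              refine Finset.sum_congr rfl fun T _ => ?_
              rcases hεcases with hε | hε <;> rw [hε] <;> field_simp <;> ring
          _ = -(P (m + 1 + 1) (Fin.cons (N 0) (Function.update (Fin.tail N) i u)) Pt) := by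
              rw [Finset.sum_neg_distrib, hCC]
      -- assemble
      rw [hJ, map_sub, map_smul, smul_sub, hterm1, hterm2]
      conv_rhs => rw [Fin.sum_univ_succ]
      rw [sub_eq_add_neg]
      congr 1
      · refine Finset.sum_congr rfl fun t _ => ?_
        rw [update_zero]
      · simp only [neg_smul, Finset.sum_neg_distrib, neg_neg]
        refine Finset.sum_congr rfl fun i _ => Finset.sum_congr rfl fun u _ => ?_
        rw [update_succ]
        rfl
  have hmain := main (k + 2) (by omega) le_rfl N Pt
  rw [hmain]
  symm
  simp only [ha1, inv_one, one_smul]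
  calc ∑ Q : Fin (k + 2) → ι, P (k + 2) Q Pt •
          ∑ i : Fin (k + 2),
            (∏ j ∈ Finset.univ.erase i, (if N j = Q j then (1 : ℝ) else 0)) •
              bb (E M) (bb (E (N i)) (F (Q i)))
      = ∑ i : Fin (k + 2), ∑ Q : Fin (k + 2) → ι,
          (∏ j ∈ Finset.univ.erase i, (if N j = Q j then (1 : ℝ) else 0)) •
            (P (k + 2) Q Pt • bb (E M) (bb (E (N i)) (F (Q i)))) := by
        simp_rw [Finset.smul_sum]
        rw [Finset.sum_comm]
        exact Finset.sum_congr rfl fun i _ => Finset.sum_congr rfl fun Q _ => by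
          rw [smul_comm]
    _ = ∑ i : Fin (k + 2), ∑ t : ι,
          P (k + 2) (Function.update N i t) Pt • bb (E M) (bb (E (N i)) (F t)) := by
        refine Finset.sum_congr rfl fun i _ => ?_
        rw [collapse (fun Q => P (k + 2) Q Pt • bb (E M) (bb (E (N i)) (F (Q i)))) N i]
        simp_rw [Function.update_self]
end

section
/- Let f_M{}^N{}_P{}^Q be the real structure constants defined by ⟦⟦E_M, F^N⟧, E_P⟧ = Σ_Q f_M{}^N{}_P{}^Q E_Q. Then for every p ≥ 2 and all indices N, M1, …, Mp the following identity holds in U_{−(p−1)}: ⟦F^N, E_{M1⋯Mp}⟧ = Σ_{i=1}^{p−1} Σ_{j=i+1}^{p} (−1)^{i+1} Σ_P f_{Mi}{}^N{}_{Mj}{}^P · E_{M1⋯M(i−1) M(i+1)⋯M(j−1) P M(j+1)⋯Mp} + (−1)^p Σ_P f_{Mp}{}^N{}_{M(p−1)}{}^P · E_{M1⋯M(p−2) P}, where in each term of the double sum the index Mi is removed and Mj is replaced by the summation index P. -/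
section
variable {V : Type} [AddCommGroup V] [Module ℝ V] {ι : Type} [Fintype ι] [DecidableEq ι]
  (bb : V →ₗ[ℝ] V →ₗ[ℝ] V) (E : ι → V)

lemma der_nest (U : ℤ → Submodule ℝ V)
    (hjac : ∀ (p q : ℤ) (x y z : V), x ∈ U p → y ∈ U q →
      bb (bb x y) z = bb x (bb y z) - ((-1 : ℝ) ^ (p * q)) • bb y (bb x z))
    (hE : ∀ M, E M ∈ U (-1))
    (h : V) (hh : h ∈ U 0) (c : ι → ι → ℝ)
    (hder : ∀ M, bb h (E M) = ∑ Q : ι, c M Q • E Q) :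
    ∀ (k : ℕ) (M : Fin (k+1) → ι),
      bb h (nest bb E (k+1) M)
        = ∑ j : Fin (k+1), ∑ Q : ι, c (M j) Q • nest bb E (k+1) (Function.update M j Q) := by
  intro k
  induction k with
  | zero =>
    intro M
    rw [show nest bb E (0+1) M = E (M 0) from rfl, hder (M 0), Fin.sum_univ_one]
    refine Finset.sum_congr rfl fun Q _ => ?_
    congr 1
  | succ k ih =>
    intro M
    set tl : Fin (k+1) → ι := fun i => M i.succ with htl
    have hj := hjac 0 (-1) h (E (M 0)) (nest bb E (k+1) tl) hh (hE (M 0))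
    norm_num at hj
    have key : bb h (nest bb E (k+2) M)
        = bb (bb h (E (M 0))) (nest bb E (k+1) tl)
          + bb (E (M 0)) (bb h (nest bb E (k+1) tl)) := by
      simp only [nest, ← htl]
      rw [hj]; abel
    have piece1 : bb (bb h (E (M 0))) (nest bb E (k+1) tl)
        = ∑ Q : ι, c (M 0) Q • nest bb E (k+2) (Function.update M 0 Q) := by
      rw [hder (M 0)]
      have e1 : bb (∑ Q : ι, c (M 0) Q • E Q) = ∑ Q : ι, c (M 0) Q • bb (E Q) := by
        rw [map_sum]; exact Finset.sum_congr rfl fun Q _ => map_smul bb _ _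
      rw [e1, LinearMap.sum_apply]
      refine Finset.sum_congr rfl fun Q _ => ?_
      rw [LinearMap.smul_apply]
      congr 1
    have piece2 : bb (E (M 0)) (bb h (nest bb E (k+1) tl))
        = ∑ j : Fin (k+1), ∑ Q : ι,
            c (M j.succ) Q • nest bb E (k+2) (Function.update M j.succ Q) := by
      rw [ih tl, map_sum]
      refine Finset.sum_congr rfl fun j _ => ?_
      rw [map_sum]
      refine Finset.sum_congr rfl fun Q _ => ?_
      rw [map_smul]
      congr 1
      have h0 : Function.update M j.succ Q 0 = M 0 := by
        rw [Function.update_apply]; simp [(Fin.succ_ne_zero j).symm]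
      have harg : (fun i : Fin (k+1) => Function.update M j.succ Q i.succ)
          = Function.update tl j Q := by
        funext i
        simp [Function.update_apply, Fin.succ_inj, htl]
      simp only [nest, h0, harg]
    rw [key, piece1, piece2]
    exact (Fin.sum_univ_succ fun j : Fin (k+2) =>
      ∑ Q : ι, c (M j) Q • nest bb E (k+2) (Function.update M j Q)).symm

lemma nest_cons_s8 (k : ℕ) (a : ι) (g : Fin (k+1) → ι) :
    nest bb E (k+2) (Fin.cons a g) = bb (E a) (nest bb E (k+1) g) := by
  simp [nest, Fin.cons_succ, Fin.cons_zero]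

lemma nest_mem (U : ℤ → Submodule ℝ V)
    (hgrade : ∀ (p q : ℤ) (x y : V), x ∈ U p → y ∈ U q → bb x y ∈ U (p + q))
    (hE : ∀ M, E M ∈ U (-1)) :
    ∀ (k : ℕ) (M : Fin (k+1) → ι), nest bb E (k+1) M ∈ U (-(k+1 : ℤ)) := by
  intro k
  induction k with
  | zero => intro M; simpa [nest] using hE (M 0)
  | succ k ih =>
    intro M
    have h := hgrade (-1) (-(k+1:ℤ)) _ _ (hE (M 0)) (ih fun i => M i.succ)
    have h2 : (-1) + (-(k+1:ℤ)) = -((k:ℤ)+1+1) := by ring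
    rw [h2] at h
    simpa [nest] using h
end
section
variable {ι : Type}

lemma cons_snoc_eq (k : ℕ) (g : Fin (k+1) → ι) (Q : ι) :
    Fin.cons (g 0) (Fin.snoc (α := fun _ => ι) (fun t : Fin k => g t.succ) Q) = Fin.snoc (α := fun _ => ι) g Q := by
  funext x
  induction x using Fin.lastCases with
  | last =>
    rw [Fin.snoc_last, ← Fin.succ_last, Fin.cons_succ, Fin.snoc_last]
  | cast y =>
    rw [Fin.snoc_castSucc]
    induction y using Fin.cases with
    | zero => rw [Fin.castSucc_zero, Fin.cons_zero]
    | succ z => rw [← Fin.succ_castSucc, Fin.cons_succ, Fin.snoc_castSucc]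

lemma cons_update_eq (k : ℕ) (M : Fin (k+3) → ι) (i j : Fin (k+2)) (hij : i < j) (Q : ι) :
    Fin.cons (M 0) (Function.update (fun t : Fin (k+1) => M ((i.succAbove t).succ))
        ⟨(j:ℕ)-1, by have := j.isLt; omega⟩ Q)
      = Function.update (fun t : Fin (k+2) => M (i.succ.succAbove t)) j Q := by
  have hj1 : 1 ≤ (j:ℕ) := by
    have : (i:ℕ) < (j:ℕ) := hij
    omega
  funext x
  induction x using Fin.cases with
  | zero =>
    rw [Fin.cons_zero, Function.update_apply, if_neg (by
      intro h
      rw [← h] at hj1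
      simp at hj1)]
    congr 1
  | succ t =>
    rw [Fin.cons_succ, Function.update_apply, Function.update_apply]
    by_cases hc : t = (⟨(j:ℕ)-1, by have := j.isLt; omega⟩ : Fin (k+1))
    · rw [if_pos hc, if_pos]
      apply Fin.ext
      rw [Fin.val_succ]
      rw [Fin.ext_iff] at hc
      simp at hc
      omega
    · rw [if_neg hc, if_neg]
      · exact congrArg M (Fin.succ_succAbove_succ i t).symm
      · intro h
        apply hc
        apply Fin.ext
        rw [Fin.ext_iff] at h
        rw [Fin.val_succ] at h
        simp
        omega
end

/-- With structure constants `f_M{}^N{}_P{}^Q` defined by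
`⟦⟦E_M, F^N⟧, E_P⟧ = Σ_Q f_M{}^N{}_P{}^Q E_Q`, for every `p = k + 2 ≥ 2`:
`⟦F^N, E_{M1⋯Mp}⟧ = Σ_{i<j} (−1)^{i+1} Σ_P f_{Mi}{}^N{}_{Mj}{}^P
E_{M1⋯M(i−1)M(i+1)⋯M(j−1)PM(j+1)⋯Mp} + (−1)^p Σ_P f_{Mp}{}^N{}_{M(p−1)}{}^P E_{M1⋯M(p−2)P}`
(here the Lean index `i : Fin p` is the paper index `i` shifted by one, so the paper
sign `(−1)^{i+1}` is `(−1)^{i}` for `i : Fin p`). -/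
theorem bracket_F_with_E_multi_expansion
    {V : Type} [AddCommGroup V] [Module ℝ V]
    (U : ℤ → Submodule ℝ V)
    (bb : V →ₗ[ℝ] V →ₗ[ℝ] V)
    (hgrade : ∀ (p q : ℤ) (x y : V), x ∈ U p → y ∈ U q → bb x y ∈ U (p + q))
    (hanti : ∀ (p q : ℤ) (x y : V), x ∈ U p → y ∈ U q →
      bb x y = (-((-1 : ℝ) ^ (p * q))) • bb y x)
    (hjac : ∀ (p q : ℤ) (x y z : V), x ∈ U p → y ∈ U q →
      bb (bb x y) z = bb x (bb y z) - ((-1 : ℝ) ^ (p * q)) • bb y (bb x z))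
    {ι : Type} [Fintype ι] [DecidableEq ι]
    (E F : ι → V)
    (hE : ∀ M, E M ∈ U (-1))
    (hF : ∀ M, F M ∈ U 1)
    (hEbasis : LinearIndependent ℝ E)
    (hEspan : Submodule.span ℝ (Set.range E) = U (-1))
    (f : ι → ι → ι → ι → ℝ)
    (hf : ∀ M N Pt, bb (bb (E M) (F N)) (E Pt) = ∑ Q : ι, f M N Pt Q • E Q)
    (k : ℕ) :
    ∀ (n : ι) (M : Fin (k + 2) → ι),
      bb (F n) (nest bb E (k + 2) M)
        = (∑ i : Fin (k + 2), ∑ j : Fin (k + 2),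
            if i < j then
              ((-1 : ℝ) ^ (i : ℕ)) •
                ∑ Pq : ι, f (M i) n (M j) Pq •
                  nest bb E (k + 1)
                    (Function.update (fun t : Fin (k + 1) => M (i.succAbove t))
                      ⟨(j : ℕ) - 1, by have := j.isLt; omega⟩ Pq)
            else 0)
          + ((-1 : ℝ) ^ (k + 2)) •
              ∑ Pq : ι, f (M (Fin.last (k + 1))) n (M ⟨k, by omega⟩) Pq •
                nest bb E (k + 1)
                  (Fin.snoc (fun t : Fin k => M ⟨(t : ℕ), by have := t.isLt; omega⟩) Pq) := by
  induction k with
  | zero =>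
    intro n M
    -- LHS = Σ_Q f (M 0) n (M 1) Q • E Q + Σ_Q f (M 1) n (M 0) Q • E Q
    have hj := hjac 1 (-1) (F n) (E (M 0)) (E (M 1)) (hF n) (hE (M 0))
    norm_num at hj
    -- hj : bb (bb F E0) E1 = bb F (bb E0 E1) + bb E0 (bb F E1)
    have hFE0 : bb (F n) (E (M 0)) = bb (E (M 0)) (F n) := by
      have := hanti 1 (-1) (F n) (E (M 0)) (hF n) (hE (M 0))
      norm_num at this
      exact this
    have hFE1 : bb (F n) (E (M 1)) = bb (E (M 1)) (F n) := by
      have := hanti 1 (-1) (F n) (E (M 1)) (hF n) (hE (M 1))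
      norm_num at this
      exact this
    have hswap : bb (E (M 0)) (bb (E (M 1)) (F n)) = - bb (bb (E (M 1)) (F n)) (E (M 0)) := by
      have h0 : bb (E (M 1)) (F n) ∈ U 0 := by
        have := hgrade (-1) 1 _ _ (hE (M 1)) (hF n)
        norm_num at this
        exact this
      have := hanti (-1) 0 (E (M 0)) (bb (E (M 1)) (F n)) (hE (M 0)) h0
      simpa using this
    have hLHS : bb (F n) (nest bb E 2 M)
        = (∑ Q : ι, f (M 0) n (M 1) Q • E Q) + ∑ Q : ι, f (M 1) n (M 0) Q • E Q := by
      have e : nest bb E 2 M = bb (E (M 0)) (E (M 1)) := by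
        simp [nest]
      rw [e]
      have hb : bb (F n) (bb (E (M 0)) (E (M 1)))
          = bb (bb (F n) (E (M 0))) (E (M 1)) - bb (E (M 0)) (bb (F n) (E (M 1))) := by
        rw [hj]; abel
      rw [hb, hFE0, hFE1, hf (M 0) n (M 1), hswap, hf (M 1) n (M 0)]
      abel
    rw [hLHS]
    have e1 : ∀ (g : Fin 1 → ι), nest bb E 1 g = E (g 0) := fun _ => rfl
    simp only [e1]
    have hset : ∀ (g : Fin 1 → ι) (j : Fin 1) (x : ι), Function.update g j x 0 = x := by
      intro g j x; rw [Subsingleton.elim (0 : Fin 1) j, Function.update_self]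
    have hsnoc : ∀ (g : Fin 0 → ι) (x : ι), (Fin.snoc g x : Fin 1 → ι) 0 = x := by
      intro g x; rw [show (0 : Fin 1) = Fin.last 0 from rfl, Fin.snoc_last]
    have hlast : Fin.last (0+1) = (1 : Fin 2) := rfl
    norm_num [Fin.sum_univ_succ, hset, hsnoc, hlast]
  | succ k ih =>
    intro n M
    set tl : Fin (k+2) → ι := fun i => M i.succ with htl
    have hh : bb (E (M 0)) (F n) ∈ U 0 := by
      have := hgrade (-1) 1 _ _ (hE (M 0)) (hF n)
      norm_num at this; exact this
    have hFE0 : bb (F n) (E (M 0)) = bb (E (M 0)) (F n) := by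
      have := hanti 1 (-1) (F n) (E (M 0)) (hF n) (hE (M 0)); norm_num at this; exact this
    have hj := hjac 1 (-1) (F n) (E (M 0)) (nest bb E (k+2) tl) (hF n) (hE (M 0))
    norm_num at hj
    rw [hFE0] at hj
    have hsplit : bb (F n) (nest bb E (k+1+2) M)
        = bb (bb (E (M 0)) (F n)) (nest bb E (k+2) tl)
          - bb (E (M 0)) (bb (F n) (nest bb E (k+2) tl)) := by
      have e : nest bb E (k+1+2) M = bb (E (M 0)) (nest bb E (k+2) tl) := by
        simp only [nest, ← htl]; rfl
      rw [e, hj]; abel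
    have hD := der_nest bb E U hjac hE (bb (E (M 0)) (F n)) hh (f (M 0) n) (hf (M 0) n) (k+1) tl
    rw [hsplit, hD, ih n tl, map_add]
    -- Explicit pieces
    have h1' : bb (E (M 0))
          (∑ i : Fin (k + 2), ∑ j : Fin (k + 2),
            if i < j then
              ((-1 : ℝ) ^ (i : ℕ)) •
                ∑ Pq : ι, f (tl i) n (tl j) Pq •
                  nest bb E (k + 1)
                    (Function.update (fun t : Fin (k + 1) => tl (i.succAbove t))
                      ⟨(j : ℕ) - 1, by have := j.isLt; omega⟩ Pq)
            else 0)
        = - ∑ i : Fin (k + 2), ∑ j : Fin (k + 2),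
            if i < j then
              ((-1 : ℝ) ^ ((i : ℕ) + 1)) •
                ∑ Pq : ι, f (tl i) n (tl j) Pq •
                  nest bb E (k + 1 + 1)
                    (Function.update (fun t : Fin (k + 2) => M (i.succ.succAbove t)) j Pq)
            else 0 := by
      rw [map_sum, ← Finset.sum_neg_distrib]
      refine Finset.sum_congr rfl fun i _ => ?_
      rw [map_sum, ← Finset.sum_neg_distrib]
      refine Finset.sum_congr rfl fun j _ => ?_
      by_cases hij : i < j
      · rw [if_pos hij, if_pos hij, map_smul, map_sum]
        rw [pow_succ]
        rw [show ∀ x : V, ((-1:ℝ)^(i:ℕ) * -1) • x = -(((-1:ℝ)^(i:ℕ)) • x) from fun x => by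
          rw [mul_comm, mul_smul]; simp, neg_neg]
        congr 1
        refine Finset.sum_congr rfl fun Pq _ => ?_
        rw [map_smul]
        congr 1
        rw [show (fun t : Fin (k + 1) => tl (i.succAbove t))
            = (fun t : Fin (k + 1) => M ((i.succAbove t).succ)) from by
          funext t; rw [htl]]
        rw [← nest_cons_s8 bb E k (M 0)
          (Function.update (fun t : Fin (k + 1) => M ((i.succAbove t).succ))
            ⟨(j : ℕ) - 1, by have := j.isLt; omega⟩ Pq)]
        rw [cons_update_eq k M i j hij Pq]
      · rw [if_neg hij, if_neg hij, map_zero, neg_zero]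
    have h2' : bb (E (M 0))
          (((-1 : ℝ) ^ (k + 2)) •
            ∑ Pq : ι, f (tl (Fin.last (k + 1))) n (tl ⟨k, by omega⟩) Pq •
              nest bb E (k + 1)
                (Fin.snoc (fun t : Fin k => tl ⟨(t : ℕ), by have := t.isLt; omega⟩) Pq))
        = - (((-1 : ℝ) ^ (k + 1 + 2)) •
            ∑ Pq : ι, f (M (Fin.last (k + 1 + 1))) n (M ⟨k + 1, by omega⟩) Pq •
              nest bb E (k + 1 + 1)
                (Fin.snoc (fun t : Fin (k + 1) => M ⟨(t : ℕ), by have := t.isLt; omega⟩) Pq)) := by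
      have hsgn : ((-1:ℝ))^(k+1+2) = -((-1:ℝ)^(k+2)) := by ring
      rw [map_smul, map_sum, hsgn, neg_smul, neg_neg]
      congr 1
      refine Finset.sum_congr rfl fun Pq _ => ?_
      rw [map_smul]
      congr 1
      have hg0 : (fun s : Fin (k+1) => M (⟨(s : ℕ), by have := s.isLt; omega⟩ : Fin (k+1+2))) 0
          = M 0 := congrArg M (Fin.ext (by simp))
      have hgs : (fun t : Fin k => tl (⟨(t : ℕ), by have := t.isLt; omega⟩ : Fin (k+2)))
          = fun t : Fin k =>
              (fun s : Fin (k+1) => M (⟨(s : ℕ), by have := s.isLt; omega⟩ : Fin (k+1+2))) t.succ := by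
        funext t
        rw [htl]
        exact congrArg M (Fin.ext (by simp))
      rw [← nest_cons_s8 bb E k (M 0)
        (Fin.snoc (fun t : Fin k => tl ⟨(t : ℕ), by have := t.isLt; omega⟩) Pq)]
      rw [hgs, ← hg0]
      exact congrArg (nest bb E (k+1+1))
        (cons_snoc_eq k (fun s : Fin (k+1) => M (⟨(s : ℕ), by have := s.isLt; omega⟩ : Fin (k+1+2))) Pq)
    have h3 : (∑ i : Fin (k + 1 + 2), ∑ j : Fin (k + 1 + 2),
            if i < j then
              ((-1 : ℝ) ^ (i : ℕ)) •
                ∑ Pq : ι, f (M i) n (M j) Pq •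
                  nest bb E (k + 1 + 1)
                    (Function.update (fun t : Fin (k + 1 + 1) => M (i.succAbove t))
                      ⟨(j : ℕ) - 1, by have := j.isLt; omega⟩ Pq)
            else 0)
        = (∑ j : Fin (k + 1 + 1), ∑ Q : ι, f (M 0) n (tl j) Q •
              nest bb E (k + 1 + 1) (Function.update tl j Q))
          + ∑ i : Fin (k + 2), ∑ j : Fin (k + 2),
            if i < j then
              ((-1 : ℝ) ^ ((i : ℕ) + 1)) •
                ∑ Pq : ι, f (tl i) n (tl j) Pq •
                  nest bb E (k + 1 + 1)
                    (Function.update (fun t : Fin (k + 2) => M (i.succ.succAbove t)) j Pq)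
            else 0 := by
      rw [Fin.sum_univ_succ]
      congr 1
      · -- i = 0 block equals the derivation sum
        rw [Fin.sum_univ_succ, if_neg (lt_irrefl _), zero_add]
        refine Finset.sum_congr rfl fun j _ => ?_
        rw [if_pos (Fin.succ_pos j)]
        rw [show (((0 : Fin (k+1+2)) : ℕ)) = 0 from rfl, pow_zero, one_smul]
        refine Finset.sum_congr rfl fun Pq _ => ?_
        rw [htl]
        congr 1
      · -- i = i'.succ block
        refine Finset.sum_congr rfl fun i _ => ?_
        rw [Fin.sum_univ_succ, if_neg (Fin.not_lt_zero _ : ¬ i.succ < 0), zero_add]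
        refine Finset.sum_congr rfl fun j _ => ?_
        by_cases hij : i < j
        · rw [if_pos (by exact Fin.succ_lt_succ_iff.mpr hij), if_pos hij]
          rw [show ((i.succ : Fin (k+1+2)) : ℕ) = (i : ℕ) + 1 from rfl]
          congr 1
        · rw [if_neg (by simpa [Fin.succ_lt_succ_iff] using hij), if_neg hij]
    rw [h1', h2', h3]
    abel
end
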